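/- arXiv:2302.01098 — 13 statements merged into one kernel-verified Lean document; each statement's English description precedes it below -/
import Mathlib

section
/- Let α ≥ 0 and β ≥ 0. The average total reward R_{α,β} is concave on Δ; that is, for all p, q ∈ Δ and t ∈ [0,1], R_{α,β}(t·p + (1−t)·q) ≥ t·R_{α,β}(p) + (1−t)·R_{α,β}(q). -/
/-!
Splitting `log p(s,a) = log (p(s,a) / p(s)) + log p(s)` gives
`R_{α,β}(p) = ⟨p, r⟩ - α ∑_{s,a} p(s,a) log (p(s,a) / p(s)) - β ∑_s p(s) log p(s)`.
The first term is linear in `p`. Each summand `p(s,a) log (p(s,a) / p(s))` is the perspective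
`(x, y) ↦ y φ(x / y)` of the convex function `φ(u) = u log u`, evaluated at the linear map
`p ↦ (p(s,a), p(s))`, and perspectives of convex functions are jointly convex; the last sum is `φ`
composed with the linear marginal map. With `α, β ≥ 0` the whole expression is concave.
-/

open Finset

/-- The average total reward `R_{α,β}(p)`, with the convention `0 · log 0 = 0`
(automatic since `Real.log 0 = 0`). -/
noncomputable def Ravg {S A : Type} [Fintype S] [Fintype A]
    (r : S → A → ℝ) (α β : ℝ) (p : S → A → ℝ) : ℝ :=
  (∑ s, ∑ a, p s a * r s a)
    - α * ∑ s, ∑ a, p s a * Real.log (p s a)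
    - (β - α) * ∑ s, ∑ a, p s a * Real.log (∑ b, p s b)

open Real

theorem ConvexOn.finset_sum {𝕜 E β ι : Type*} [Semiring 𝕜] [PartialOrder 𝕜] [AddCommMonoid E]
    [AddCommMonoid β] [PartialOrder β] [IsOrderedAddMonoid β] [SMul 𝕜 E] [DistribMulAction 𝕜 β]
    {s : Set E} (hs : Convex 𝕜 s) (t : Finset ι) {f : ι → E → β}
    (hf : ∀ i ∈ t, ConvexOn 𝕜 s (f i)) : ConvexOn 𝕜 s fun x ↦ ∑ i ∈ t, f i x := by
  refine ⟨hs, fun x hx y hy a b ha hb hab ↦ ?_⟩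
  simp only [smul_sum, ← sum_add_distrib]
  exact sum_le_sum fun i hi ↦ (hf i hi).2 hx hy ha hb hab

theorem ConvexOn.perspective {f : ℝ → ℝ} (hf : ConvexOn ℝ (Set.Icc 0 1) f) :
    ConvexOn ℝ {z : ℝ × ℝ | 0 ≤ z.1 ∧ z.1 ≤ z.2} fun z ↦ z.2 * f (z.1 / z.2) := by
  refine ⟨?_, ?_⟩
  · rintro ⟨x₁, y₁⟩ ⟨hx₁, hxy₁⟩ ⟨x₂, y₂⟩ ⟨hx₂, hxy₂⟩ a b ha hb -
    simp only [Set.mem_ofPred_eq, Prod.smul_mk, Prod.mk_add_mk, smul_eq_mul]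
    constructor <;> nlinarith
  rintro ⟨x₁, y₁⟩ ⟨hx₁, hxy₁⟩ ⟨x₂, y₂⟩ ⟨hx₂, hxy₂⟩ a b ha hb hab
  simp only [Prod.smul_mk, Prod.mk_add_mk, smul_eq_mul]
  have hay : 0 ≤ a * y₁ := by nlinarith
  have hby : 0 ≤ b * y₂ := by nlinarith
  rcases (add_nonneg hay hby).eq_or_lt with hy | hy
  · have h₁ : a * y₁ = 0 := by linarith
    have h₂ : b * y₂ = 0 := by linarith
    rw [← hy, zero_mul, ← mul_assoc, ← mul_assoc, h₁, h₂]
    simp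
  set y := a * y₁ + b * y₂
  have cancel {c x y' : ℝ} (h : y' = 0 → x = 0) : c * y' / y * (x / y') = c * x / y := by
    rcases eq_or_ne y' 0 with rfl | hy'
    · simp [h rfl]
    · field_simp
  -- `(a x₁ + b x₂) / y` is the convex combination of `x₁ / y₁` and `x₂ / y₂`
  -- with weights `a y₁ / y` and `b y₂ / y`
  have key := hf.2 (x := x₁ / y₁) (y := x₂ / y₂)
    ⟨div_nonneg hx₁ (hx₁.trans hxy₁), div_le_one_of_le₀ hxy₁ (hx₁.trans hxy₁)⟩
    ⟨div_nonneg hx₂ (hx₂.trans hxy₂), div_le_one_of_le₀ hxy₂ (hx₂.trans hxy₂)⟩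
    (div_nonneg hay hy.le) (div_nonneg hby hy.le)
    (by rw [← add_div]; exact div_self hy.ne')
  simp only [smul_eq_mul] at key
  rw [cancel (fun h ↦ by linarith), cancel (fun h ↦ by linarith), ← add_div] at key
  calc y * f ((a * x₁ + b * x₂) / y)
      ≤ y * (a * y₁ / y * f (x₁ / y₁) + b * y₂ / y * f (x₂ / y₂)) :=
        mul_le_mul_of_nonneg_left key hy.le
    _ = a * (y₁ * f (x₁ / y₁)) + b * (y₂ * f (x₂ / y₂)) := by field_simp [hy.ne']

theorem mul_log_sub_mul_log_eq_mul_mul_log_div {x y : ℝ} (hx : 0 ≤ x) (hxy : x ≤ y) :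
    x * log x - x * log y = y * (x / y * log (x / y)) := by
  rcases hx.eq_or_lt with rfl | hx
  · simp
  have hy := (hx.trans_le hxy).ne'
  rw [log_div hx.ne' hy]
  field_simp

theorem convexOn_mul_log_sub_mul_log :
    ConvexOn ℝ {z : ℝ × ℝ | 0 ≤ z.1 ∧ z.1 ≤ z.2} fun z ↦ z.1 * log z.1 - z.1 * log z.2 :=
  (convexOn_mul_log.subset Set.Icc_subset_Ici_self (convex_Icc 0 1)).perspective.congr
    fun _ hz ↦ (mul_log_sub_mul_log_eq_mul_mul_log_div hz.1 hz.2).symm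

section Marginal

variable {S A : Type} [Fintype A]

noncomputable def marginal (s : S) : (S → A → ℝ) →ₗ[ℝ] ℝ :=
  ∑ b, LinearMap.proj (R := ℝ) (φ := fun _ : A ↦ ℝ) b ∘ₗ LinearMap.proj s

@[simp] lemma marginal_apply (s : S) (p : S → A → ℝ) : marginal s p = ∑ b, p s b := by
  simp [marginal]

lemma le_marginal {p : S → A → ℝ} (hp : 0 ≤ p) (s : S) (a : A) : p s a ≤ marginal s p := by
  simpa using single_le_sum (fun b _ ↦ hp s b) (mem_univ a)

lemma marginal_nonneg {p : S → A → ℝ} (hp : 0 ≤ p) (s : S) : 0 ≤ marginal s p := by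
  simpa using sum_nonneg fun b _ ↦ hp s b

noncomputable def entryAndMarginal (s : S) (a : A) : (S → A → ℝ) →ₗ[ℝ] ℝ × ℝ :=
  (LinearMap.proj (R := ℝ) (φ := fun _ : A ↦ ℝ) a ∘ₗ LinearMap.proj s).prod (marginal s)

@[simp] lemma entryAndMarginal_apply (s : S) (a : A) (p : S → A → ℝ) :
    entryAndMarginal s a p = (p s a, marginal s p) := rfl

end Marginal

section Reward

variable {S A : Type} [Fintype S] [Fintype A]

theorem Ravg_eq (r : S → A → ℝ) (α β : ℝ) (p : S → A → ℝ) :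
    Ravg r α β p = (∑ s, ∑ a, p s a * r s a)
      - α * ∑ s, ∑ a, (p s a * log (p s a) - p s a * log (marginal s p))
      - β * ∑ s, marginal s p * log (marginal s p) := by
  simp only [Ravg, marginal_apply, sum_sub_distrib, ← sum_mul]
  ring

theorem concaveOn_Ravg (r : S → A → ℝ) {α β : ℝ} (hα : 0 ≤ α) (hβ : 0 ≤ β) :
    ConcaveOn ℝ (Set.Ici 0) (Ravg r α β) := by
  have hK : Convex ℝ (Set.Ici (0 : S → A → ℝ)) := convex_Ici 0
  have hreward : ConcaveOn ℝ (Set.Ici 0) fun p : S → A → ℝ ↦ ∑ s, ∑ a, p s a * r s a :=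
    ((∑ s, ∑ a, r s a • (LinearMap.proj (R := ℝ) (φ := fun _ : A ↦ ℝ) a ∘ₗ
      LinearMap.proj s)).concaveOn hK).congr fun p _ ↦ by simp [mul_comm]
  have hcond : ConvexOn ℝ (Set.Ici 0) fun p : S → A → ℝ ↦
      ∑ s, ∑ a, (p s a * log (p s a) - p s a * log (marginal s p)) :=
    ConvexOn.finset_sum hK _ fun s _ ↦ ConvexOn.finset_sum hK _ fun a _ ↦
      ((convexOn_mul_log_sub_mul_log.comp_linearMap (entryAndMarginal s a)).subset
        (fun p hp ↦ ⟨Set.mem_Ici.1 hp s a, le_marginal hp s a⟩) hK).congr fun p _ ↦ by simp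
  have hmarg : ConvexOn ℝ (Set.Ici 0) fun p : S → A → ℝ ↦
      ∑ s, marginal s p * log (marginal s p) :=
    ConvexOn.finset_sum hK _ fun s _ ↦ (convexOn_mul_log.comp_linearMap (marginal s)).subset
      (fun p hp ↦ marginal_nonneg hp s) hK
  exact ((hreward.sub (hcond.smul hα)).sub (hmarg.smul hβ)).congr
    fun p _ ↦ (Ravg_eq r α β p).symm

end Reward

theorem Ravg_concaveOn_general {S A : Type} [Fintype S] [Fintype A]
    (r : S → A → ℝ) (α β : ℝ) (hα : 0 ≤ α) (hβ : 0 ≤ β)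
    (p q : S → A → ℝ)
    (hp0 : ∀ s a, 0 ≤ p s a)
    (hq0 : ∀ s a, 0 ≤ q s a)
    (t : ℝ) (ht0 : 0 ≤ t) (ht1 : t ≤ 1) :
    Ravg r α β (fun s a => t * p s a + (1 - t) * q s a)
      ≥ t * Ravg r α β p + (1 - t) * Ravg r α β q :=
  (concaveOn_Ravg r hα hβ).2 (show 0 ≤ p from hp0) (show 0 ≤ q from hq0) ht0 (sub_nonneg.2 ht1)
    (add_sub_cancel t 1)

/-- for `α ≥ 0`, `β ≥ 0`, the average total reward is concave on `Δ`. -/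
theorem Ravg_concaveOn {S A : Type} [Fintype S] [Fintype A] [Nonempty S] [Nonempty A]
    (r : S → A → ℝ) (α β : ℝ) (hα : 0 ≤ α) (hβ : 0 ≤ β)
    (p q : S → A → ℝ)
    (hp0 : ∀ s a, 0 ≤ p s a) (hp1 : (∑ s, ∑ a, p s a) = 1)
    (hq0 : ∀ s a, 0 ≤ q s a) (hq1 : (∑ s, ∑ a, q s a) = 1)
    (t : ℝ) (ht0 : 0 ≤ t) (ht1 : t ≤ 1) :
    Ravg r α β (fun s a => t * p s a + (1 - t) * q s a)
      ≥ t * Ravg r α β p + (1 - t) * Ravg r α β q :=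
  Ravg_concaveOn_general r α β hα hβ p q hp0 hq0 t ht0 ht1
end

section
/- Let α > 0 and β > 0, and suppose V* : S → ℝ minimizes the function V ↦ log Z_V over all V : S → ℝ. Then the distribution p*(s,a) = Z_{V*}^{-1} · (Σ_b exp(A_{V*}(s,b)/α))^{α/β − 1} · exp(A_{V*}(s,a)/α) belongs to the feasible set D, maximizes R_{α,β} over D, and satisfies R_{α,β}(p*) = β · log Z_{V*}. -/
/-!
For any `V`, put `p_V(s,a) = Z_V⁻¹ w_V(s)^(α/β-1) exp(A_V(s,a)/α)` with
`w_V(s) = Σ_a exp(A_V(s,a)/α)`. It is a probability distribution satisfying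
`A_V(s,a) = α log p_V(s,a) + (β-α) log p_V(s) + β log Z_V`, and for stationary `q` the
`V`-terms of `Σ q A_V` telescope away. Hence every feasible `q` satisfies
`R(q) = β log Z_V - α (KL(q ‖ p_V) - KL(q_S ‖ p_{V,S})) - β KL(q_S ‖ p_{V,S})`, which is at
most `β log Z_V` by Gibbs' inequality and the log-sum inequality (weak duality). At a
minimizer `V*` the derivative of `t ↦ Z_{V* + t W}` vanishes; it is `Z_{V*}/β` times
`Σ p_{V*}(s,a) (Σ_{s'} W(s') P(s'|s,a) - W(s))`, and `W = 1_{s'}` shows that `p_{V*}` is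
stationary, so it is feasible and attains the bound.
-/

open Finset

/-- The advantage `A_V(s,a) = r(s,a) + Σ_{s'} V(s') P(s'|s,a) − V(s)`,
where `P s a s'` denotes `P(s'|s,a)`. -/
noncomputable def Adv {S A : Type} [Fintype S]
    (P : S → A → S → ℝ) (r : S → A → ℝ) (V : S → ℝ) (s : S) (a : A) : ℝ :=
  r s a + (∑ s', V s' * P s a s') - V s

/-- The partition function `Z_V = Σ_s (Σ_a exp(A_V(s,a)/α))^{α/β}`. -/
noncomputable def Zfun {S A : Type} [Fintype S] [Fintype A]
    (P : S → A → S → ℝ) (r : S → A → ℝ) (α β : ℝ) (V : S → ℝ) : ℝ :=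
  ∑ s, (∑ a, Real.exp (Adv P r V s a / α)) ^ (α / β)

open Real

section RelEntropy

variable {ι : Type*} [Fintype ι]

noncomputable def relEntropy (q p : ι → ℝ) : ℝ :=
  ∑ i, (q i * log (q i) - q i * log (p i))

omit [Fintype ι] in
theorem sub_le_mul_log_sub_mul_log {x y : ℝ} (hx : 0 ≤ x) (hy : 0 < y) :
    x - y ≤ x * log x - x * log y := by
  rcases hx.eq_or_lt with rfl | hx
  · simpa using hy.le
  · have h := mul_le_mul_of_nonneg_left (log_le_sub_one_of_pos (div_pos hy hx)) hx.le
    rw [log_div hy.ne' hx.ne', mul_sub, mul_sub, mul_one, mul_div_cancel₀ _ hx.ne'] at h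
    linarith

theorem sum_sub_sum_le_relEntropy {q p : ι → ℝ} (hq : ∀ i, 0 ≤ q i) (hp : ∀ i, 0 < p i) :
    ∑ i, q i - ∑ i, p i ≤ relEntropy q p := by
  rw [← sum_sub_distrib]
  exact sum_le_sum fun i _ => sub_le_mul_log_sub_mul_log (hq i) (hp i)

theorem relEntropy_mul_const {q p : ι → ℝ} (hp : ∀ i, p i ≠ 0) {c : ℝ} (hc : c ≠ 0) :
    relEntropy q (fun i => p i * c) = relEntropy q p - (∑ i, q i) * log c := by
  simp only [relEntropy, log_mul (hp _) hc, sum_mul, ← sum_sub_distrib]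
  exact sum_congr rfl fun i _ => by ring

theorem log_sum_inequality {q p : ι → ℝ} (hq : ∀ i, 0 ≤ q i) (hp : ∀ i, 0 < p i) :
    (∑ i, q i) * log (∑ i, q i) - (∑ i, q i) * log (∑ i, p i) ≤ relEntropy q p := by
  rcases (sum_nonneg fun i _ => hq i).eq_or_lt with hm | hm
  · have hq0 : ∀ i, q i = 0 := fun i =>
      (sum_eq_zero_iff_of_nonneg fun i _ => hq i).1 hm.symm i (mem_univ i)
    simp [relEntropy, hq0]
  have : Nonempty ι := by
    by_contra h
    simp [not_nonempty_iff.1 h] at hm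
  have hM : 0 < ∑ i, p i := sum_pos (fun i _ => hp i) univ_nonempty
  have hc : 0 < (∑ i, q i) / ∑ i, p i := div_pos hm hM
  -- Gibbs' inequality against `p` rescaled to the total mass of `q`.
  have h := sum_sub_sum_le_relEntropy hq fun i => mul_pos (hp i) hc
  rw [relEntropy_mul_const (fun i => (hp i).ne') hc.ne', ← sum_mul,
    mul_div_cancel₀ _ hM.ne', sub_self, log_div hm.ne' hM.ne', mul_sub] at h
  linarith

theorem relEntropy_self (p : ι → ℝ) : relEntropy p p = 0 := by
  simp [relEntropy]

end RelEntropy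

theorem hasDerivAt_sum_rpow_sum_exp {ι κ : Type*} [Fintype ι] [Fintype κ] [Nonempty κ]
    (f c : ι → κ → ℝ) (γ : ℝ) :
    HasDerivAt (fun t => ∑ i, (∑ j, exp (f i j + t * c i j)) ^ γ)
      (∑ i, (∑ j, exp (f i j) * c i j) * γ * (∑ j, exp (f i j)) ^ (γ - 1)) 0 := by
  refine HasDerivAt.fun_sum fun i _ => ?_
  have h : HasDerivAt (fun t => ∑ j, exp (f i j + t * c i j)) (∑ j, exp (f i j) * c i j) 0 := by
    simpa using HasDerivAt.fun_sum fun j _ =>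
      (((hasDerivAt_id (0 : ℝ)).mul_const (c i j)).const_add (f i j)).exp
  simpa using h.rpow_const (p := γ) (Or.inl (by positivity))

section Duality

variable {S A : Type} [Fintype S] [Fintype A]
  (P : S → A → S → ℝ) (r : S → A → ℝ) (α β : ℝ)

def IsStationaryOccupancy (q : S → A → ℝ) : Prop :=
  ∀ s' : S, ∑ s, ∑ a, P s a s' * q s a = ∑ b, q s' b

noncomputable def stateWeight (V : S → ℝ) (s : S) : ℝ :=
  ∑ a, exp (Adv P r V s a / α)

noncomputable def dualDist (V : S → ℝ) (s : S) (a : A) : ℝ :=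
  (Zfun P r α β V)⁻¹ * stateWeight P r α V s ^ (α / β - 1) * exp (Adv P r V s a / α)

theorem stateWeight_pos [Nonempty A] (V : S → ℝ) (s : S) : 0 < stateWeight P r α V s :=
  sum_pos (fun _ _ => exp_pos _) univ_nonempty

theorem Zfun_eq_sum_stateWeight (V : S → ℝ) :
    Zfun P r α β V = ∑ s, stateWeight P r α V s ^ (α / β) := rfl

theorem Zfun_pos [Nonempty S] [Nonempty A] (V : S → ℝ) : 0 < Zfun P r α β V :=
  sum_pos (fun s _ => rpow_pos_of_pos (stateWeight_pos P r α V s) _) univ_nonempty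

theorem dualDist_pos [Nonempty S] [Nonempty A] (V : S → ℝ) (s : S) (a : A) :
    0 < dualDist P r α β V s a := by
  have := Zfun_pos P r α β V
  have := stateWeight_pos P r α V s
  unfold dualDist
  positivity

theorem sum_dualDist_state [Nonempty A] (V : S → ℝ) (s : S) :
    ∑ b, dualDist P r α β V s b =
      (Zfun P r α β V)⁻¹ * stateWeight P r α V s ^ (α / β) := by
  rw [show ∑ b, dualDist P r α β V s b = (Zfun P r α β V)⁻¹ *
      stateWeight P r α V s ^ (α / β - 1) * stateWeight P r α V s from (mul_sum _ _ _).symm,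
    mul_assoc, ← rpow_add_one (stateWeight_pos P r α V s).ne', sub_add_cancel]

theorem sum_dualDist [Nonempty S] [Nonempty A] (V : S → ℝ) :
    ∑ s, ∑ a, dualDist P r α β V s a = 1 := by
  simp only [sum_dualDist_state, ← mul_sum, ← Zfun_eq_sum_stateWeight]
  exact inv_mul_cancel₀ (Zfun_pos P r α β V).ne'

theorem Adv_eq_log_dualDist [Nonempty S] [Nonempty A] (hα : α ≠ 0) (hβ : β ≠ 0)
    (V : S → ℝ) (s : S) (a : A) :
    Adv P r V s a = α * log (dualDist P r α β V s a)
      + (β - α) * log (∑ b, dualDist P r α β V s b) + β * log (Zfun P r α β V) := by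
  have hZ := Zfun_pos P r α β V
  have hw := stateWeight_pos P r α V s
  rw [sum_dualDist_state, dualDist, log_mul (by positivity) (exp_pos _).ne',
    log_mul (by positivity) (by positivity), log_mul (by positivity) (by positivity),
    log_inv, log_exp, log_rpow hw, log_rpow hw]
  field_simp
  ring

theorem sum_mul_Adv_of_isStationaryOccupancy {q : S → A → ℝ} (hq : IsStationaryOccupancy P q)
    (V : S → ℝ) :
    ∑ s, ∑ a, q s a * Adv P r V s a = ∑ s, ∑ a, q s a * r s a := by
  have hflow : ∑ s, ∑ a, q s a * ∑ s', V s' * P s a s' = ∑ s, ∑ a, q s a * V s :=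
    calc ∑ s, ∑ a, q s a * ∑ s', V s' * P s a s'
        = ∑ s, ∑ a, ∑ s', V s' * (P s a s' * q s a) := by
          simp only [mul_sum]
          exact sum_congr rfl fun s _ => sum_congr rfl fun a _ => sum_congr rfl fun s' _ => by
            ring
      _ = ∑ s', ∑ s, ∑ a, V s' * (P s a s' * q s a) :=
          (sum_congr rfl fun s _ => sum_comm).trans sum_comm
      _ = ∑ s', V s' * ∑ b, q s' b := by
          simp only [← mul_sum, hq _]
      _ = ∑ s, ∑ a, q s a * V s := by
          simp only [mul_sum]
          exact sum_congr rfl fun s _ => sum_congr rfl fun a _ => mul_comm _ _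
  simp only [Adv, mul_add, mul_sub, sum_add_distrib, sum_sub_distrib, hflow]
  ring

theorem Ravg_eq_sub_relEntropy [Nonempty S] [Nonempty A] (hα : α ≠ 0) (hβ : β ≠ 0)
    {q : S → A → ℝ} (hq : IsStationaryOccupancy P q) (hq1 : ∑ s, ∑ a, q s a = 1)
    (V : S → ℝ) :
    Ravg r α β q = β * log (Zfun P r α β V)
      - α * ∑ s, relEntropy (q s) (dualDist P r α β V s)
      - (β - α) * relEntropy (fun s => ∑ b, q s b)
          (fun s => ∑ b, dualDist P r α β V s b) := by
  have hA : ∑ s, ∑ a, q s a * Adv P r V s a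
      = α * ∑ s, ∑ a, q s a * log (dualDist P r α β V s a)
        + (β - α) * ∑ s, ∑ a, q s a * log (∑ b, dualDist P r α β V s b)
        + β * log (Zfun P r α β V) := by
    calc ∑ s, ∑ a, q s a * Adv P r V s a
        = ∑ s, ∑ a, (α * (q s a * log (dualDist P r α β V s a))
            + (β - α) * (q s a * log (∑ b, dualDist P r α β V s b))
            + β * log (Zfun P r α β V) * q s a) :=
          sum_congr rfl fun s _ => sum_congr rfl fun a _ => by
            rw [Adv_eq_log_dualDist P r α β hα hβ]; ring
      _ = _ := by simp only [sum_add_distrib, ← mul_sum, hq1, mul_one]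
  rw [Ravg, ← sum_mul_Adv_of_isStationaryOccupancy P r hq V, hA]
  simp only [relEntropy, sum_sub_distrib, sum_mul]
  ring

theorem Ravg_le_of_isStationaryOccupancy [Nonempty S] [Nonempty A] (hα : 0 < α) (hβ : 0 < β)
    {q : S → A → ℝ} (hq0 : ∀ s a, 0 ≤ q s a) (hq1 : ∑ s, ∑ a, q s a = 1)
    (hq : IsStationaryOccupancy P q) (V : S → ℝ) :
    Ravg r α β q ≤ β * log (Zfun P r α β V) := by
  have hp := dualDist_pos P r α β V
  have hmarg :
      0 ≤ relEntropy (fun s => ∑ b, q s b) (fun s => ∑ b, dualDist P r α β V s b) := by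
    have := sum_sub_sum_le_relEntropy (q := fun s => ∑ b, q s b)
      (fun s => sum_nonneg fun b _ => hq0 s b)
      fun s => sum_pos (fun b _ => hp s b) univ_nonempty
    rwa [hq1, sum_dualDist, sub_self] at this
  have hchain : relEntropy (fun s => ∑ b, q s b) (fun s => ∑ b, dualDist P r α β V s b)
      ≤ ∑ s, relEntropy (q s) (dualDist P r α β V s) :=
    sum_le_sum fun s _ => log_sum_inequality (hq0 s) (hp s)
  rw [Ravg_eq_sub_relEntropy P r α β hα.ne' hβ.ne' hq hq1 V]
  nlinarith [mul_nonneg hα.le (sub_nonneg.2 hchain), mul_nonneg hβ.le hmarg]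

theorem Ravg_dualDist [Nonempty S] [Nonempty A] (hα : α ≠ 0) (hβ : β ≠ 0) {V : S → ℝ}
    (hV : IsStationaryOccupancy P (dualDist P r α β V)) :
    Ravg r α β (dualDist P r α β V) = β * log (Zfun P r α β V) := by
  simp [Ravg_eq_sub_relEntropy P r α β hα hβ hV (sum_dualDist P r α β V) V, relEntropy_self]

omit [Fintype A] in
theorem Adv_add_smul (V W : S → ℝ) (t : ℝ) (s : S) (a : A) :
    Adv P r (V + t • W) s a = Adv P r V s a + t * (∑ s', W s' * P s a s' - W s) := by
  simp only [Adv, Pi.add_apply, Pi.smul_apply, smul_eq_mul, add_mul, sum_add_distrib, mul_assoc,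
    ← mul_sum]
  ring

theorem sum_flow_mul_dualDist_eq_zero [Nonempty S] [Nonempty A] (hα : α ≠ 0) (hβ : β ≠ 0)
    {V : S → ℝ} (hV : ∀ V', Zfun P r α β V ≤ Zfun P r α β V') (W : S → ℝ) :
    ∑ s, ∑ a, (∑ s', W s' * P s a s' - W s) * dualDist P r α β V s a = 0 := by
  have hline : (fun t : ℝ => Zfun P r α β (V + t • W)) = fun t =>
      ∑ s, (∑ a, exp (Adv P r V s a / α + t * ((∑ s', W s' * P s a s' - W s) / α)))
        ^ (α / β) := by
    funext t
    simp only [Zfun, Adv_add_smul, add_div, mul_div_assoc]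
  have hderiv := hasDerivAt_sum_rpow_sum_exp (fun s a => Adv P r V s a / α)
    (fun s a => (∑ s', W s' * P s a s' - W s) / α) (α / β)
  rw [← hline] at hderiv
  have hmin : IsLocalMin (fun t : ℝ => Zfun P r α β (V + t • W)) 0 :=
    Filter.Eventually.of_forall fun t => by simpa using hV _
  -- The derivative of `t ↦ Z_{V + t W}` at `0` is `Z_V / β` times the sum.
  rw [← mul_zero (β * (Zfun P r α β V)⁻¹), ← hmin.hasDerivAt_eq_zero hderiv, mul_sum]
  refine sum_congr rfl fun s _ => ?_
  rw [sum_mul, sum_mul, mul_sum]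
  refine sum_congr rfl fun a _ => ?_
  simp only [dualDist, stateWeight]
  field_simp

theorem isStationaryOccupancy_dualDist [Nonempty S] [Nonempty A] (hα : α ≠ 0) (hβ : β ≠ 0)
    {V : S → ℝ} (hV : ∀ V', Zfun P r α β V ≤ Zfun P r α β V') :
    IsStationaryOccupancy P (dualDist P r α β V) := by
  classical
  intro s₀
  have h := sum_flow_mul_dualDist_eq_zero P r α β hα hβ hV (Pi.single s₀ 1)
  simp only [Pi.single_apply, ite_mul, one_mul, zero_mul, Fintype.sum_ite_eq', sub_mul,
    sum_sub_distrib, sum_ite_irrel, sum_const_zero] at h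
  linarith

end Duality

theorem optimal_from_dual_minimizer_general {S A : Type} [Fintype S] [Fintype A]
    [Nonempty S] [Nonempty A]
    (P : S → A → S → ℝ)
    (r : S → A → ℝ) (α β : ℝ) (hα : 0 < α) (hβ : 0 < β)
    (Vstar : S → ℝ)
    (hmin : ∀ V : S → ℝ,
      Real.log (Zfun P r α β Vstar) ≤ Real.log (Zfun P r α β V))
    (pstar : S → A → ℝ)
    (hpstar : ∀ s a, pstar s a =
      (Zfun P r α β Vstar)⁻¹ *
        (∑ b, Real.exp (Adv P r Vstar s b / α)) ^ (α / β - 1) *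
        Real.exp (Adv P r Vstar s a / α)) :
    ((∀ s a, 0 ≤ pstar s a) ∧ (∑ s, ∑ a, pstar s a) = 1 ∧
        (∀ s' : S, (∑ s, ∑ a, P s a s' * pstar s a) = ∑ b, pstar s' b)) ∧
      (∀ q : S → A → ℝ,
        ((∀ s a, 0 ≤ q s a) ∧ (∑ s, ∑ a, q s a) = 1 ∧
          (∀ s' : S, (∑ s, ∑ a, P s a s' * q s a) = ∑ b, q s' b)) →
        Ravg r α β q ≤ Ravg r α β pstar) ∧
      Ravg r α β pstar = β * Real.log (Zfun P r α β Vstar) := by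
  obtain rfl : pstar = dualDist P r α β Vstar := funext fun s => funext (hpstar s)
  have hZmin : ∀ V, Zfun P r α β Vstar ≤ Zfun P r α β V := fun V =>
    (log_le_log_iff (Zfun_pos P r α β Vstar) (Zfun_pos P r α β V)).1 (hmin V)
  have hstat := isStationaryOccupancy_dualDist P r α β hα.ne' hβ.ne' hZmin
  have hval := Ravg_dualDist P r α β hα.ne' hβ.ne' hstat
  have hnonneg := fun s a => (dualDist_pos P r α β Vstar s a).le
  refine ⟨⟨hnonneg, sum_dualDist P r α β Vstar, hstat⟩,
    fun q ⟨hq0, hq1, hq⟩ => ?_, hval⟩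
  exact hval ▸ Ravg_le_of_isStationaryOccupancy P r α β hα hβ hq0 hq1 hq Vstar

/-- if `V*` minimizes `V ↦ log Z_V`, then
`p*(s,a) = Z_{V*}⁻¹ (Σ_b exp(A_{V*}(s,b)/α))^{α/β−1} exp(A_{V*}(s,a)/α)`
belongs to `D`, maximizes `R_{α,β}` over `D`, and `R_{α,β}(p*) = β log Z_{V*}`. -/
theorem optimal_from_dual_minimizer {S A : Type} [Fintype S] [Fintype A]
    [Nonempty S] [Nonempty A]
    (P : S → A → S → ℝ) (hP0 : ∀ s a s', 0 ≤ P s a s')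
    (hP1 : ∀ s a, (∑ s', P s a s') = 1)
    (r : S → A → ℝ) (α β : ℝ) (hα : 0 < α) (hβ : 0 < β)
    (Vstar : S → ℝ)
    (hmin : ∀ V : S → ℝ,
      Real.log (Zfun P r α β Vstar) ≤ Real.log (Zfun P r α β V))
    (pstar : S → A → ℝ)
    (hpstar : ∀ s a, pstar s a =
      (Zfun P r α β Vstar)⁻¹ *
        (∑ b, Real.exp (Adv P r Vstar s b / α)) ^ (α / β - 1) *
        Real.exp (Adv P r Vstar s a / α)) :
    ((∀ s a, 0 ≤ pstar s a) ∧ (∑ s, ∑ a, pstar s a) = 1 ∧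
        (∀ s' : S, (∑ s, ∑ a, P s a s' * pstar s a) = ∑ b, pstar s' b)) ∧
      (∀ q : S → A → ℝ,
        ((∀ s a, 0 ≤ q s a) ∧ (∑ s, ∑ a, q s a) = 1 ∧
          (∀ s' : S, (∑ s, ∑ a, P s a s' * q s a) = ∑ b, q s' b)) →
        Ravg r α β q ≤ Ravg r α β pstar) ∧
      Ravg r α β pstar = β * Real.log (Zfun P r α β Vstar) :=
  optimal_from_dual_minimizer_general P r α β hα hβ Vstar hmin pstar hpstar
end

section
/- Let α > 0 and β > 0. For every p ∈ D and every V : S → ℝ, one has R_{α,β}(p) ≤ β · log Z_V (weak duality). -/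
/-!
Stationarity of `p` makes the potential terms of the advantage cancel on average, so
`Σ p r = Σ p A_V`. Gibbs' variational principle, `Σ x g - τ Σ x log x ≤ τ X log Σ exp (g / τ) - τ X log X`
for weights `x ≥ 0` of total mass `X`, applied over the actions of each state at temperature `α`
bounds that state's contribution by `α m(s) log W(s) - α m(s) log m(s)`, where `m` is the state
marginal and `W(s) = Σ_a exp (A_V(s,a) / α)`. Applied once more over the states at temperature `β`
to `g(s) = α log W(s)`, it bounds the total by `β log Σ_s W(s)^(α/β) = β log Z_V`.
-/

open Finset

/-- The feasible set `D`. Here `P s a s'` denotes `P(s'|s,a)`. -/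
def Dset {S A : Type} [Fintype S] [Fintype A] (P : S → A → S → ℝ) :
    Set (S → A → ℝ) :=
  {p | (∀ s a, 0 ≤ p s a) ∧ (∑ s, ∑ a, p s a) = 1 ∧
    ∀ s' : S, (∑ s, ∑ a, P s a s' * p s a) = ∑ b, p s' b}

open Real

lemma mul_log_sub_mul_log_le {x c : ℝ} (hx : 0 ≤ x) (hc : 0 < c) :
    x * log c - x * log x ≤ c - x := by
  rcases hx.eq_or_lt with rfl | hx
  · simpa using hc.le
  · have h := mul_le_mul_of_nonneg_left (log_le_sub_one_of_pos (div_pos hc hx)) hx.le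
    rw [log_div hc.ne' hx.ne', mul_sub, mul_sub, mul_div_cancel₀ _ hx.ne'] at h
    linarith

theorem sum_mul_sub_sum_mul_log_le {ι : Type*} [Fintype ι] {x : ι → ℝ} (hx : ∀ i, 0 ≤ x i)
    (f : ι → ℝ) :
    ∑ i, x i * f i - ∑ i, x i * log (x i)
      ≤ (∑ i, x i) * log (∑ i, exp (f i)) - (∑ i, x i) * log (∑ i, x i) := by
  set X := ∑ i, x i
  rcases (sum_nonneg fun i _ => hx i : 0 ≤ X).eq_or_lt with hX | hX
  · have hx0 : ∀ i, x i = 0 := fun i =>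
      (sum_eq_zero_iff_of_nonneg fun i _ => hx i).1 hX.symm i (mem_univ i)
    simp [X, hx0]
  set Y := ∑ i, exp (f i)
  have hY : 0 < Y := sum_pos (fun i _ => exp_pos _) (nonempty_of_sum_ne_zero hX.ne')
  -- compare `x` with the Gibbs weights `exp f · X / Y`, which also sum to `X`
  have hc : ∀ i, 0 < exp (f i) * X / Y := fun i => by positivity
  have hlog : ∀ i, log (exp (f i) * X / Y) = f i + log X - log Y := fun i => by
    rw [log_div (by positivity) hY.ne', log_mul (exp_pos _).ne' hX.ne', log_exp]
  have hsum : ∑ i, exp (f i) * X / Y = X := by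
    rw [← sum_div, ← sum_mul, mul_div_cancel_left₀ _ hY.ne']
  have key := sum_le_sum fun i (_ : i ∈ univ) => mul_log_sub_mul_log_le (hx i) (hc i)
  simp only [hlog, sum_sub_distrib, hsum, mul_add, mul_sub, sum_add_distrib, ← sum_mul] at key
  linarith

theorem sum_mul_sub_mul_sum_mul_log_le {ι : Type*} [Fintype ι] {τ : ℝ} (hτ : 0 < τ)
    {x : ι → ℝ} (hx : ∀ i, 0 ≤ x i) (g : ι → ℝ) :
    ∑ i, x i * g i - τ * ∑ i, x i * log (x i)
      ≤ τ * ((∑ i, x i) * log (∑ i, exp (g i / τ)) - (∑ i, x i) * log (∑ i, x i)) := by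
  have h := mul_le_mul_of_nonneg_left (sum_mul_sub_sum_mul_log_le hx (g · / τ)) hτ.le
  have hg : τ * ∑ i, x i * (g i / τ) = ∑ i, x i * g i := by
    rw [mul_sum]
    exact sum_congr rfl fun i _ => by field_simp
  rwa [mul_sub τ, hg] at h

section Stationary

variable {S A : Type} [Fintype S] [Fintype A] {P : S → A → S → ℝ} {p : S → A → ℝ}

theorem sum_sum_mul_sum_mul_eq_of_stationary
    (hstat : ∀ s', ∑ s, ∑ a, P s a s' * p s a = ∑ b, p s' b) (V : S → ℝ) :
    ∑ s, ∑ a, p s a * ∑ s', V s' * P s a s' = ∑ s, ∑ a, p s a * V s := by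
  calc ∑ s, ∑ a, p s a * ∑ s', V s' * P s a s'
      = ∑ s', V s' * ∑ s, ∑ a, P s a s' * p s a := by
        simp only [mul_sum]
        conv_rhs => rw [sum_comm]
        refine sum_congr rfl fun s _ => sum_comm.trans <| sum_congr rfl fun s' _ => ?_
        exact sum_congr rfl fun a _ => by ring
    _ = ∑ s, ∑ a, p s a * V s := by
        simp only [hstat, mul_sum]
        exact sum_congr rfl fun s _ => sum_congr rfl fun a _ => mul_comm _ _

theorem sum_sum_mul_adv_eq_of_stationary
    (hstat : ∀ s', ∑ s, ∑ a, P s a s' * p s a = ∑ b, p s' b) (r : S → A → ℝ) (V : S → ℝ) :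
    ∑ s, ∑ a, p s a * Adv P r V s a = ∑ s, ∑ a, p s a * r s a := by
  have h := sum_sum_mul_sum_mul_eq_of_stationary hstat V
  simp only [Adv, mul_sub, mul_add, sum_sub_distrib, sum_add_distrib, h]
  ring

end Stationary

theorem weak_duality_general {S A : Type} [Fintype S] [Fintype A]
    (P : S → A → S → ℝ)
    (r : S → A → ℝ) (α β : ℝ) (hα : 0 < α) (hβ : 0 < β)
    (p : S → A → ℝ) (hp : p ∈ Dset P) (V : S → ℝ) :
    Ravg r α β p ≤ β * Real.log (Zfun P r α β V) := by
  obtain ⟨hp0, hp1, hstat⟩ := hp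
  set m : S → ℝ := fun s => ∑ a, p s a
  set W : S → ℝ := fun s => ∑ a, exp (Adv P r V s a / α)
  have hA : (univ : Finset A).Nonempty := by
    obtain ⟨s, -, hs⟩ := exists_ne_zero_of_sum_ne_zero (hp1.trans_ne one_ne_zero)
    exact nonempty_of_sum_ne_zero hs
  have hZ : Zfun P r α β V = ∑ s, exp (α * log (W s) / β) := by
    refine sum_congr rfl fun s _ => ?_
    rw [rpow_def_of_pos (sum_pos (fun a _ => exp_pos _) hA), mul_comm, mul_div_right_comm]
  have hR : Ravg r α β p = ∑ s, (∑ a, p s a * Adv P r V s a - α * ∑ a, p s a * log (p s a))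
      - (β - α) * ∑ s, m s * log (m s) := by
    simp only [Ravg, sum_sub_distrib, ← mul_sum, sum_sum_mul_adv_eq_of_stationary hstat, m,
      ← sum_mul]
  have hstate := fun s => sum_mul_sub_mul_sum_mul_log_le hα (hp0 s) (Adv P r V s)
  have htop := sum_mul_sub_mul_sum_mul_log_le (x := m) hβ
    (fun s => sum_nonneg fun a _ => hp0 s a) (fun s => α * log (W s))
  rw [show ∑ s, m s = 1 from hp1, log_one, one_mul, mul_zero, sub_zero, ← hZ] at htop
  calc Ravg r α β p
      ≤ ∑ s, α * (m s * log (W s) - m s * log (m s)) - (β - α) * ∑ s, m s * log (m s) := by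
        rw [hR]; gcongr with s; exact hstate s
    _ = ∑ s, m s * (α * log (W s)) - β * ∑ s, m s * log (m s) := by
        simp only [mul_sub, sum_sub_distrib, mul_left_comm (m _) α, ← mul_sum]
        ring
    _ ≤ β * log (Zfun P r α β V) := htop

/-- weak duality: for `α > 0`, `β > 0`, every `p ∈ D` and every
`V : S → ℝ`, one has `R_{α,β}(p) ≤ β log Z_V`. -/
theorem weak_duality {S A : Type} [Fintype S] [Fintype A]
    [Nonempty S] [Nonempty A]
    (P : S → A → S → ℝ) (hP0 : ∀ s a s', 0 ≤ P s a s')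
    (hP1 : ∀ s a, (∑ s', P s a s') = 1)
    (r : S → A → ℝ) (α β : ℝ) (hα : 0 < α) (hβ : 0 < β)
    (p : S → A → ℝ) (hp : p ∈ Dset P) (V : S → ℝ) :
    Ravg r α β p ≤ β * Real.log (Zfun P r α β V) :=
  weak_duality_general P r α β hα hβ p hp V
end

section
/- Let α > 0 and β > 0. The dual function V ↦ log Z_V = log ( Σ_s (Σ_a exp(A_V(s,a)/α))^{α/β} ) is a convex function of V ∈ ℝ^S. -/
open Finset

/-- Log-sum-exp of convex functions is convex. -/
lemma convexOn_logSumExp {ι E : Type*} [Fintype ι] [Nonempty ι]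
    [AddCommGroup E] [Module ℝ E]
    (f : ι → E → ℝ) (hf : ∀ i, ConvexOn ℝ Set.univ (f i)) :
    ConvexOn ℝ Set.univ (fun x => Real.log (∑ i, Real.exp (f i x))) := by
  refine ⟨convex_univ, ?_⟩
  intro x _ y _ t u ht hu htu
  set Ax := ∑ i, Real.exp (f i x) with hAx
  set Ay := ∑ i, Real.exp (f i y) with hAy
  have hAxpos : 0 < Ax := Finset.sum_pos (fun i _ => Real.exp_pos _) Finset.univ_nonempty
  have hAypos : 0 < Ay := Finset.sum_pos (fun i _ => Real.exp_pos _) Finset.univ_nonempty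
  have hz : 0 < ∑ i, Real.exp (f i (t • x + u • y)) :=
    Finset.sum_pos (fun i _ => Real.exp_pos _) Finset.univ_nonempty
  have key : ∑ i, Real.exp (f i (t • x + u • y)) ≤ Ax ^ t * Ay ^ u := by
    have step1 : ∀ i ∈ Finset.univ, Real.exp (f i (t • x + u • y)) ≤
        Ax ^ t * Ay ^ u * (t * (Real.exp (f i x) / Ax) + u * (Real.exp (f i y) / Ay)) := by
      intro i _
      have hcv := (hf i).2 (Set.mem_univ x) (Set.mem_univ y) ht hu htu
      simp only [smul_eq_mul] at hcv
      have h1 : Real.exp (f i (t • x + u • y)) ≤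
          (Real.exp (f i x)) ^ t * (Real.exp (f i y)) ^ u := by
        calc Real.exp (f i (t • x + u • y)) ≤ Real.exp (t * f i x + u * f i y) :=
              Real.exp_le_exp.2 hcv
          _ = (Real.exp (f i x)) ^ t * (Real.exp (f i y)) ^ u := by
              rw [Real.exp_add, mul_comm t, mul_comm u, Real.exp_mul, Real.exp_mul]
      have h2 : (Real.exp (f i x) / Ax) ^ t * (Real.exp (f i y) / Ay) ^ u ≤
          t * (Real.exp (f i x) / Ax) + u * (Real.exp (f i y) / Ay) :=
        Real.geom_mean_le_arith_mean2_weighted ht hu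
          (by positivity) (by positivity) htu
      have h3 : (Real.exp (f i x)) ^ t * (Real.exp (f i y)) ^ u =
          Ax ^ t * Ay ^ u * ((Real.exp (f i x) / Ax) ^ t * (Real.exp (f i y) / Ay) ^ u) := by
        rw [Real.div_rpow (Real.exp_pos _).le hAxpos.le,
          Real.div_rpow (Real.exp_pos _).le hAypos.le]
        field_simp
      calc Real.exp (f i (t • x + u • y)) ≤ (Real.exp (f i x)) ^ t * (Real.exp (f i y)) ^ u :=
            h1
        _ = Ax ^ t * Ay ^ u * ((Real.exp (f i x) / Ax) ^ t * (Real.exp (f i y) / Ay) ^ u) := h3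
        _ ≤ Ax ^ t * Ay ^ u * (t * (Real.exp (f i x) / Ax) + u * (Real.exp (f i y) / Ay)) := by
            have : (0:ℝ) ≤ Ax ^ t * Ay ^ u := by positivity
            exact mul_le_mul_of_nonneg_left h2 this
    calc ∑ i, Real.exp (f i (t • x + u • y)) ≤
        ∑ i, Ax ^ t * Ay ^ u * (t * (Real.exp (f i x) / Ax) + u * (Real.exp (f i y) / Ay)) :=
          Finset.sum_le_sum step1
      _ = Ax ^ t * Ay ^ u := by
          rw [← Finset.mul_sum]
          have : ∑ i, (t * (Real.exp (f i x) / Ax) + u * (Real.exp (f i y) / Ay)) = 1 := by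
            rw [Finset.sum_add_distrib]
            simp only [div_eq_mul_inv, ← Finset.mul_sum]
            rw [← Finset.sum_mul, ← Finset.sum_mul, ← hAx, ← hAy,
              mul_inv_cancel₀ hAxpos.ne', mul_inv_cancel₀ hAypos.ne']
            simpa using htu
          rw [this, mul_one]
  have := Real.log_le_log hz key
  calc Real.log (∑ i, Real.exp (f i (t • x + u • y))) ≤ Real.log (Ax ^ t * Ay ^ u) := this
    _ = t * Real.log Ax + u * Real.log Ay := by
        rw [Real.log_mul (by positivity) (by positivity),
          Real.log_rpow hAxpos, Real.log_rpow hAypos]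
  -- goal closed by calc? ensure forms match
  -- smul_eq_mul handled via defeq

/-- for `α > 0`, `β > 0`, the dual function `V ↦ log Z_V` is convex
on `ℝ^S`. -/
theorem dual_function_convex {S A : Type} [Fintype S] [Fintype A]
    [Nonempty S] [Nonempty A]
    (P : S → A → S → ℝ) (hP0 : ∀ s a s', 0 ≤ P s a s')
    (hP1 : ∀ s a, (∑ s', P s a s') = 1)
    (r : S → A → ℝ) (α β : ℝ) (hα : 0 < α) (hβ : 0 < β) :
    ConvexOn ℝ Set.univ (fun V : S → ℝ => Real.log (Zfun P r α β V)) := by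
  have hZ : (fun V : S → ℝ => Real.log (Zfun P r α β V)) =
      fun V : S → ℝ => Real.log (∑ s, Real.exp
        ((α / β) • (fun W : S → ℝ => Real.log (∑ a, Real.exp (Adv P r W s a / α))) V)) := by
    funext V
    congr 1
    unfold Zfun
    refine Finset.sum_congr rfl fun s _ => ?_
    have hpos : 0 < ∑ a, Real.exp (Adv P r V s a / α) :=
      Finset.sum_pos (fun a _ => Real.exp_pos _) Finset.univ_nonempty
    rw [Real.rpow_def_of_pos hpos]
    simp [smul_eq_mul, mul_comm]
  rw [hZ]
  apply convexOn_logSumExp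
  intro s
  have hinner : ConvexOn ℝ Set.univ
      (fun W : S → ℝ => Real.log (∑ a, Real.exp (Adv P r W s a / α))) := by
    apply convexOn_logSumExp
    intro a
    refine ⟨convex_univ, ?_⟩
    intro x _ y _ t u ht hu htu
    apply le_of_eq
    simp only [Adv, Pi.add_apply, Pi.smul_apply, smul_eq_mul]
    have hsum : ∑ s', (t * x s' + u * y s') * P s a s' =
        t * ∑ s', x s' * P s a s' + u * ∑ s', y s' * P s a s' := by
      rw [Finset.mul_sum, Finset.mul_sum, ← Finset.sum_add_distrib]
      exact Finset.sum_congr rfl fun s' _ => by ring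
    rw [hsum]
    linear_combination (-(r s a) / α) * htu
  exact hinner.smul (le_of_lt (div_pos hα hβ))
end

section
/- Let α > 0 and β > 0, and define F : (S × A → ℝ) → ℝ by F(A) = log ( Σ_s (Σ_a exp(A(s,a)/α))^{α/β} ). Then: (i) for any A₁, A₂ : S × A → ℝ such that A₁ − A₂ is not a constant function, F((A₁ + A₂)/2) < (F(A₁) + F(A₂))/2 (strict convexity off the diagonal direction); and (ii) for every A : S × A → ℝ and every c ∈ ℝ, F(A + c·𝟙) = F(A) + c/β, where 𝟙 is the constant function 1 (affine with slope 1/β along the diagonal direction). -/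
/-!
Write `lse u = log ∑ᵢ exp uᵢ`, so that `F(B) = lse_s ((α/β) · lse_a (B(s,a)/α))`; then (ii) is
the rule `lse (u + c) = lse u + c` applied twice. For (i), the normalized weights
`aᵢ = uᵢ - lse u` and `bᵢ = vᵢ - lse v` satisfy `∑ exp aᵢ = ∑ exp bᵢ = 1`, and
`lse ((u + v)/2) = (lse u + lse v)/2 + lse ((a + b)/2)`. Strict convexity of `exp` gives
`∑ exp ((aᵢ + bᵢ)/2) ≤ ∑ (exp aᵢ + exp bᵢ)/2 = 1`, strictly unless `a = b`, i.e. unless `u - v`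
is constant. So `lse` is strictly midpoint convex off the diagonal, and it is strictly monotone.
In the nested expression, either some row of `B₁ - B₂` is non-constant and the inner `lse` of
that row is strict, or every row is constant, with constants varying over `s`, and the outer
`lse` is strict.
-/

open Finset

noncomputable def Fdual {S A : Type} [Fintype S] [Fintype A]
    (α β : ℝ) (B : S × A → ℝ) : ℝ :=
  Real.log (∑ s, (∑ a, Real.exp (B (s, a) / α)) ^ (α / β))

lemma Real.exp_add_div_two_lt {a b : ℝ} (h : a ≠ b) :
    Real.exp ((a + b) / 2) < (Real.exp a + Real.exp b) / 2 := by
  have := strictConvexOn_exp.2 (Set.mem_univ a) (Set.mem_univ b) h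
    (by norm_num : (0 : ℝ) < 1 / 2) (by norm_num : (0 : ℝ) < 1 / 2) (by norm_num)
  simp only [smul_eq_mul] at this
  rw [show (a + b) / 2 = 1 / 2 * a + 1 / 2 * b by ring]
  linarith

lemma Real.exp_add_div_two_le (a b : ℝ) :
    Real.exp ((a + b) / 2) ≤ (Real.exp a + Real.exp b) / 2 := by
  rcases eq_or_ne a b with rfl | h
  · simp
  · exact (Real.exp_add_div_two_lt h).le

noncomputable def logSumExp {ι : Type*} [Fintype ι] (u : ι → ℝ) : ℝ :=
  Real.log (∑ i, Real.exp (u i))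

section LogSumExp

variable {ι : Type*} [Fintype ι]

lemma sum_exp_pos [Nonempty ι] (u : ι → ℝ) : 0 < ∑ i, Real.exp (u i) :=
  sum_pos (fun i _ => Real.exp_pos (u i)) univ_nonempty

lemma sum_exp_sub_logSumExp [Nonempty ι] (u : ι → ℝ) :
    ∑ i, Real.exp (u i - logSumExp u) = 1 := by
  simp only [Real.exp_sub, logSumExp, Real.exp_log (sum_exp_pos u), ← sum_div]
  exact div_self (sum_exp_pos u).ne'

lemma logSumExp_add_const [Nonempty ι] (u : ι → ℝ) (c : ℝ) :
    logSumExp (fun i => u i + c) = logSumExp u + c := by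
  simp only [logSumExp, Real.exp_add, ← sum_mul]
  rw [Real.log_mul (sum_exp_pos u).ne' (Real.exp_pos c).ne', Real.log_exp]

lemma logSumExp_le_logSumExp [Nonempty ι] {u v : ι → ℝ} (h : ∀ i, u i ≤ v i) :
    logSumExp u ≤ logSumExp v :=
  Real.log_le_log (sum_exp_pos u) (sum_le_sum fun i _ => Real.exp_le_exp.2 (h i))

lemma logSumExp_lt_logSumExp {u v : ι → ℝ} (h : ∀ i, u i ≤ v i) (hlt : ∃ i, u i < v i) :
    logSumExp u < logSumExp v := by
  obtain ⟨i, hi⟩ := hlt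
  have : Nonempty ι := ⟨i⟩
  exact Real.log_lt_log (sum_exp_pos u) (sum_lt_sum (fun i _ => Real.exp_le_exp.2 (h i))
    ⟨i, mem_univ i, Real.exp_lt_exp.2 hi⟩)

lemma logSumExp_add_div_two_nonpos {a b : ι → ℝ} (ha : ∑ i, Real.exp (a i) = 1)
    (hb : ∑ i, Real.exp (b i) = 1) : logSumExp (fun i => (a i + b i) / 2) ≤ 0 := by
  refine Real.log_nonpos (sum_nonneg fun i _ => (Real.exp_pos _).le) ?_
  calc ∑ i, Real.exp ((a i + b i) / 2)
      ≤ ∑ i, (Real.exp (a i) + Real.exp (b i)) / 2 :=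
        sum_le_sum fun i _ => Real.exp_add_div_two_le _ _
    _ = 1 := by rw [← sum_div, sum_add_distrib, ha, hb]; norm_num

lemma logSumExp_add_div_two_neg {a b : ι → ℝ} (ha : ∑ i, Real.exp (a i) = 1)
    (hb : ∑ i, Real.exp (b i) = 1) (hab : a ≠ b) :
    logSumExp (fun i => (a i + b i) / 2) < 0 := by
  obtain ⟨i₀, hi₀⟩ := Function.ne_iff.1 hab
  have : Nonempty ι := ⟨i₀⟩
  refine Real.log_neg (sum_exp_pos _) ?_
  calc ∑ i, Real.exp ((a i + b i) / 2)
      < ∑ i, (Real.exp (a i) + Real.exp (b i)) / 2 :=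
        sum_lt_sum (fun i _ => Real.exp_add_div_two_le _ _)
          ⟨i₀, mem_univ _, Real.exp_add_div_two_lt hi₀⟩
    _ = 1 := by rw [← sum_div, sum_add_distrib, ha, hb]; norm_num

lemma logSumExp_add_div_two_eq [Nonempty ι] (u v : ι → ℝ) :
    logSumExp (fun i => (u i + v i) / 2) =
      logSumExp (fun i => ((u i - logSumExp u) + (v i - logSumExp v)) / 2) +
        (logSumExp u + logSumExp v) / 2 := by
  rw [← logSumExp_add_const]
  congr 1
  funext i
  ring

lemma logSumExp_add_div_two_le [Nonempty ι] (u v : ι → ℝ) :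
    logSumExp (fun i => (u i + v i) / 2) ≤ (logSumExp u + logSumExp v) / 2 := by
  rw [logSumExp_add_div_two_eq]
  linarith [logSumExp_add_div_two_nonpos (sum_exp_sub_logSumExp u) (sum_exp_sub_logSumExp v)]

lemma logSumExp_add_div_two_lt {u v : ι → ℝ} (h : ¬ ∃ c, ∀ i, u i - v i = c) :
    logSumExp (fun i => (u i + v i) / 2) < (logSumExp u + logSumExp v) / 2 := by
  have : Nonempty ι := not_isEmpty_iff.1 fun _ => h ⟨0, fun i => isEmptyElim i⟩
  have hne : (fun i => u i - logSumExp u) ≠ fun i => v i - logSumExp v := fun heq =>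
    h ⟨logSumExp u - logSumExp v, fun i => by linarith [congrFun heq i]⟩
  rw [logSumExp_add_div_two_eq]
  linarith [logSumExp_add_div_two_neg (sum_exp_sub_logSumExp u) (sum_exp_sub_logSumExp v) hne]

end LogSumExp

lemma logSumExp_nested_add_div_two_lt {S A : Type*} [Fintype S] [Fintype A] [Nonempty S]
    [Nonempty A] {r : ℝ} (hr : 0 < r) {U V : S → A → ℝ}
    (h : ¬ ∃ c, ∀ s a, U s a - V s a = c) :
    logSumExp (fun s => r * logSumExp fun a => (U s a + V s a) / 2) <
      (logSumExp (fun s => r * logSumExp (U s)) +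
        logSumExp (fun s => r * logSumExp (V s))) / 2 := by
  have hrow : ∀ s, r * logSumExp (fun a => (U s a + V s a) / 2) ≤
      (r * logSumExp (U s) + r * logSumExp (V s)) / 2 := fun s => by
    rw [← mul_add, mul_div_assoc]
    exact mul_le_mul_of_nonneg_left (logSumExp_add_div_two_le (U s) (V s)) hr.le
  by_cases hconst : ∀ s, ∃ c, ∀ a, U s a - V s a = c
  · choose c hc using hconst
    have hUV : ∀ s, logSumExp (U s) = logSumExp (V s) + c s := fun s => by
      rw [← logSumExp_add_const]
      congr 1
      funext a
      linarith [hc s a]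
    calc _ ≤ logSumExp (fun s => (r * logSumExp (U s) + r * logSumExp (V s)) / 2) :=
          logSumExp_le_logSumExp hrow
      _ < _ := logSumExp_add_div_two_lt fun ⟨k, hk⟩ => h ⟨k / r, fun s a => by
          rw [hc s a, eq_div_iff hr.ne', ← hk s, hUV s]
          ring⟩
  · obtain ⟨s₀, hs₀⟩ := not_forall.1 hconst
    calc _ < logSumExp (fun s => (r * logSumExp (U s) + r * logSumExp (V s)) / 2) := by
          refine logSumExp_lt_logSumExp hrow ⟨s₀, ?_⟩
          rw [← mul_add, mul_div_assoc]
          exact mul_lt_mul_of_pos_left (logSumExp_add_div_two_lt hs₀) hr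
      _ ≤ _ := logSumExp_add_div_two_le _ _

section Fdual

variable {S A : Type} [Fintype S] [Fintype A] [Nonempty A]

lemma Fdual_eq_logSumExp (α β : ℝ) (B : S × A → ℝ) :
    Fdual α β B = logSumExp (fun s => α / β * logSumExp fun a => B (s, a) / α) := by
  unfold Fdual logSumExp
  congr 1
  refine sum_congr rfl fun s _ => ?_
  rw [Real.rpow_def_of_pos (sum_exp_pos _), mul_comm]

lemma Fdual_add_const [Nonempty S] {α : ℝ} (hα : α ≠ 0) (β : ℝ) (B : S × A → ℝ)
    (c : ℝ) :
    Fdual α β (fun x => B x + c) = Fdual α β B + c / β := by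
  have hrow : ∀ s, α / β * logSumExp (fun a => (B (s, a) + c) / α) =
      α / β * logSumExp (fun a => B (s, a) / α) + c / β := fun s => by
    simp only [add_div, logSumExp_add_const]
    field_simp
  simp only [Fdual_eq_logSumExp, hrow]
  exact logSumExp_add_const _ _

lemma Fdual_add_div_two_lt [Nonempty S] {α β : ℝ} (hα : 0 < α) (hβ : 0 < β)
    {B₁ B₂ : S × A → ℝ} (h : ¬ ∃ c, ∀ x, B₁ x - B₂ x = c) :
    Fdual α β (fun x => (B₁ x + B₂ x) / 2) < (Fdual α β B₁ + Fdual α β B₂) / 2 := by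
  have hUV : ¬ ∃ c, ∀ s a, B₁ (s, a) / α - B₂ (s, a) / α = c := fun ⟨k, hk⟩ =>
    h ⟨k * α, fun x => by rw [← hk x.1 x.2, ← sub_div, div_mul_cancel₀ _ hα.ne']⟩
  simp only [Fdual_eq_logSumExp, add_div _ _ α, div_right_comm _ (2 : ℝ) α]
  exact logSumExp_nested_add_div_two_lt (div_pos hα hβ) hUV

end Fdual

/-- for `α > 0`, `β > 0`:
(i) `F` is strictly midpoint-convex in any direction off the diagonal, and
(ii) `F` is affine with slope `1/β` along the diagonal direction. -/
theorem Fdual_strictConvex_offDiagonal_and_affine_diagonal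
    {S A : Type} [Fintype S] [Fintype A] [Nonempty S] [Nonempty A]
    (α β : ℝ) (hα : 0 < α) (hβ : 0 < β) :
    (∀ B₁ B₂ : S × A → ℝ, (¬ ∃ c : ℝ, ∀ x : S × A, B₁ x - B₂ x = c) →
      Fdual α β (fun x => (B₁ x + B₂ x) / 2)
        < (Fdual α β B₁ + Fdual α β B₂) / 2) ∧
    (∀ (B : S × A → ℝ) (c : ℝ),
      Fdual α β (fun x => B x + c) = Fdual α β B + c / β) :=
  ⟨fun _ _ h => Fdual_add_div_two_lt hα hβ h, Fdual_add_const hα.ne' β⟩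
end

section
/- Let α > 0 and β > 0, and for V : S → ℝ define the probability distribution p_V(s,a) = Z_V^{-1} · (Σ_b exp(A_V(s,b)/α))^{α/β − 1} · exp(A_V(s,a)/α). Then V is a critical point of the dual function V ↦ log Z_V (i.e., all partial derivatives ∂(log Z_V)/∂V(s) vanish) if and only if p_V satisfies the stationarity constraints Σ_{s,a} P(s'|s,a) p_V(s,a) = Σ_b p_V(s',b) for every s' ∈ S. -/
/-! The derivative of `log Z_V` in the coordinate `V(s₀)` is `β⁻¹` times the defect
`Σ_{s,a} P(s₀|s,a) p_V(s,a) − Σ_b p_V(s₀,b)` of the stationarity constraint at `s₀`: the advantage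
is affine in `V` with slope `P(s₀|s,a) − [s = s₀]`, and differentiating the log-partition function
weights these slopes by `p_V`, the factors `α` from the exponent and from `exp(·/α)` cancelling. -/

open Finset

theorem hasDerivAt_log_sum_rpow_sum_exp {ι κ : Type*} [Fintype ι] [Fintype κ] [Nonempty ι]
    [Nonempty κ] (g : ι → κ → ℝ → ℝ) (g' : ι → κ → ℝ) (q x : ℝ)
    (hg : ∀ i j, HasDerivAt (g i j) (g' i j) x) :
    HasDerivAt (fun t => Real.log (∑ i, (∑ j, Real.exp (g i j t)) ^ q))
      ((∑ i, (∑ j, Real.exp (g i j x) * g' i j) * q * (∑ j, Real.exp (g i j x)) ^ (q - 1)) /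
        ∑ i, (∑ j, Real.exp (g i j x)) ^ q) x := by
  have hE_pos : ∀ i, 0 < ∑ j, Real.exp (g i j x) :=
    fun i => sum_pos (fun j _ => Real.exp_pos _) univ_nonempty
  have hZ_pos : 0 < ∑ i, (∑ j, Real.exp (g i j x)) ^ q :=
    sum_pos (fun i _ => Real.rpow_pos_of_pos (hE_pos i) q) univ_nonempty
  have hE : ∀ i, HasDerivAt (fun t => ∑ j, Real.exp (g i j t))
      (∑ j, Real.exp (g i j x) * g' i j) x :=
    fun i => HasDerivAt.fun_sum fun j _ => (hg i j).exp
  exact (HasDerivAt.fun_sum fun i _ => (hE i).rpow_const (Or.inl (hE_pos i).ne')).log hZ_pos.ne'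

def advPartial {S A : Type} [DecidableEq S] (P : S → A → S → ℝ) (s₀ s : S) (a : A) : ℝ :=
  P s a s₀ - if s = s₀ then 1 else 0

section Advantage

variable {S A : Type} [Fintype S] [DecidableEq S] (P : S → A → S → ℝ)

theorem adv_update (r : S → A → ℝ) (V : S → ℝ) (s₀ : S) (t : ℝ) (s : S) (a : A) :
    Adv P r (Function.update V s₀ t) s a = Adv P r V s a + (t - V s₀) * advPartial P s₀ s a := by
  have hsum : ∑ s', Function.update V s₀ t s' * P s a s' =
      ∑ s', V s' * P s a s' + (t - V s₀) * P s a s₀ := by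
    have hterm : ∀ s', Function.update V s₀ t s' * P s a s' - V s' * P s a s' =
        if s' = s₀ then (t - V s₀) * P s a s' else 0 := by
      intro s'
      by_cases h : s' = s₀ <;> simp [h, sub_mul]
    rw [← sub_eq_iff_eq_add', ← sum_sub_distrib, sum_congr rfl fun s' _ => hterm s',
      sum_ite_eq' univ s₀, if_pos (mem_univ s₀)]
  rw [Adv, Adv, hsum, advPartial, Function.update_apply]
  split_ifs with h
  · subst h; ring
  · ring

theorem hasDerivAt_adv_update (r : S → A → ℝ) (V : S → ℝ) (s₀ s : S) (a : A) :
    HasDerivAt (fun t => Adv P r (Function.update V s₀ t) s a) (advPartial P s₀ s a) (V s₀) := by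
  simp_rw [adv_update]
  simpa using (((hasDerivAt_id (V s₀)).sub_const (V s₀)).mul_const
    (advPartial P s₀ s a)).const_add (Adv P r V s a)

variable [Fintype A]

theorem sum_sum_mul_advPartial (p : S → A → ℝ) (s₀ : S) :
    ∑ s, ∑ a, p s a * advPartial P s₀ s a = ∑ s, ∑ a, P s a s₀ * p s a - ∑ b, p s₀ b := by
  simp_rw [advPartial, mul_sub, mul_ite, mul_one, mul_zero, sum_sub_distrib, mul_comm (p _ _)]
  congr 1
  simp

theorem deriv_log_zfun_update [Nonempty S] [Nonempty A] (r : S → A → ℝ) {α : ℝ} (hα : α ≠ 0)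
    (β : ℝ) (V : S → ℝ) (pV : S → A → ℝ)
    (hpV : ∀ s a, pV s a = (Zfun P r α β V)⁻¹ *
      (∑ b, Real.exp (Adv P r V s b / α)) ^ (α / β - 1) * Real.exp (Adv P r V s a / α))
    (s₀ : S) :
    deriv (fun t => Real.log (Zfun P r α β (Function.update V s₀ t))) (V s₀) =
      β⁻¹ * (∑ s, ∑ a, P s a s₀ * pV s a - ∑ b, pV s₀ b) := by
  have hg : ∀ s a, HasDerivAt (fun t => Adv P r (Function.update V s₀ t) s a / α)
      (advPartial P s₀ s a / α) (V s₀) :=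
    fun s a => (hasDerivAt_adv_update P r V s₀ s a).div_const α
  have hderiv := hasDerivAt_log_sum_rpow_sum_exp _ _ (α / β) _ hg
  simp only [Function.update_eq_self] at hderiv
  simp only [Zfun]
  rw [hderiv.deriv, ← sum_sum_mul_advPartial, mul_sum, div_eq_inv_mul, mul_sum]
  refine sum_congr rfl fun s _ => ?_
  simp_rw [sum_mul, mul_sum, hpV, Zfun]
  refine sum_congr rfl fun a _ => ?_
  field_simp

end Advantage

theorem critical_point_iff_stationary_general {S A : Type} [Fintype S] [Fintype A]
    [DecidableEq S] [Nonempty S] [Nonempty A]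
    (P : S → A → S → ℝ)
    (r : S → A → ℝ) (α β : ℝ) (hα : 0 < α) (hβ : 0 < β)
    (V : S → ℝ) (pV : S → A → ℝ)
    (hpV : ∀ s a, pV s a =
      (Zfun P r α β V)⁻¹ *
        (∑ b, Real.exp (Adv P r V s b / α)) ^ (α / β - 1) *
        Real.exp (Adv P r V s a / α)) :
    ((∀ s : S,
        deriv (fun t : ℝ =>
          Real.log (Zfun P r α β (Function.update V s t))) (V s) = 0)
      ↔ (∀ s' : S, (∑ s, ∑ a, P s a s' * pV s a) = ∑ b, pV s' b)) := by
  simp_rw [deriv_log_zfun_update P r hα.ne' β V pV hpV, mul_eq_zero, inv_eq_zero, hβ.ne',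
    false_or, sub_eq_zero]

/-- `V` is a critical point of the dual function `V ↦ log Z_V`
(all partial derivatives vanish) iff the induced distribution
`p_V(s,a) = Z_V⁻¹ (Σ_b exp(A_V(s,b)/α))^{α/β−1} exp(A_V(s,a)/α)`
satisfies the stationarity constraints. -/
theorem critical_point_iff_stationary {S A : Type} [Fintype S] [Fintype A]
    [DecidableEq S] [Nonempty S] [Nonempty A]
    (P : S → A → S → ℝ) (hP0 : ∀ s a s', 0 ≤ P s a s')
    (hP1 : ∀ s a, (∑ s', P s a s') = 1)
    (r : S → A → ℝ) (α β : ℝ) (hα : 0 < α) (hβ : 0 < β)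
    (V : S → ℝ) (pV : S → A → ℝ)
    (hpV : ∀ s a, pV s a =
      (Zfun P r α β V)⁻¹ *
        (∑ b, Real.exp (Adv P r V s b / α)) ^ (α / β - 1) *
        Real.exp (Adv P r V s a / α)) :
    ((∀ s : S,
        deriv (fun t : ℝ =>
          Real.log (Zfun P r α β (Function.update V s t))) (V s) = 0)
      ↔ (∀ s' : S, (∑ s, ∑ a, P s a s' * pV s a) = ∑ b, pV s' b)) :=
  critical_point_iff_stationary_general P r α β hα hβ V pV hpV
end

section
/- Let α > 0 and β > 0. If V₁ : S → ℝ and V₂ : S → ℝ both minimize the dual function V ↦ log Z_V over ℝ^S, then the associated advantages coincide: A_{V₁}(s,a) = A_{V₂}(s,a) for all (s,a) ∈ S × A. -/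
open Finset

private lemma amgm {a b : ℝ} (ha : 0 ≤ a) (hb : 0 ≤ b) :
    Real.sqrt (a * b) ≤ (a + b) / 2 := by
  rw [Real.sqrt_mul ha]
  nlinarith [sq_nonneg (Real.sqrt a - Real.sqrt b), Real.sq_sqrt ha, Real.sq_sqrt hb]

private lemma amgm_eq {a b : ℝ} (ha : 0 ≤ a) (hb : 0 ≤ b)
    (h : Real.sqrt (a * b) = (a + b) / 2) : a = b := by
  rw [Real.sqrt_mul ha] at h
  have h2 : (Real.sqrt a - Real.sqrt b) ^ 2 = 0 := by
    nlinarith [Real.sq_sqrt ha, Real.sq_sqrt hb]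
  have h3 : Real.sqrt a = Real.sqrt b := by
    have := pow_eq_zero_iff (n := 2) (by norm_num) |>.mp h2
    linarith
  calc a = Real.sqrt a ^ 2 := (Real.sq_sqrt ha).symm
    _ = Real.sqrt b ^ 2 := by rw [h3]
    _ = b := Real.sq_sqrt hb

private lemma sqrt_exp' (u : ℝ) : Real.sqrt (Real.exp u) = Real.exp (u / 2) := by
  rw [show Real.exp u = (Real.exp (u / 2)) ^ 2 by
    rw [sq, ← Real.exp_add, add_halves]]
  exact Real.sqrt_sq (Real.exp_nonneg _)

private lemma rpow_base_inj {x y c : ℝ} (hx : 0 < x) (hy : 0 < y) (hc : 0 < c)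
    (h : x ^ c = y ^ c) : x = y := by
  rcases lt_trichotomy x y with h' | h' | h'
  · exact absurd h (ne_of_lt (Real.rpow_lt_rpow hx.le h' hc))
  · exact h'
  · exact absurd h.symm (ne_of_lt (Real.rpow_lt_rpow hy.le h' hc))

private lemma sqrt_rpow' {t c : ℝ} (ht : 0 ≤ t) :
    (Real.sqrt t) ^ c = Real.sqrt (t ^ c) := by
  rw [Real.sqrt_eq_rpow, Real.sqrt_eq_rpow, ← Real.rpow_mul ht, ← Real.rpow_mul ht,
    mul_comm]

/-- any two minimizers of the dual function `V ↦ log Z_V` yield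
the same advantage function. -/
theorem advantage_unique_of_minimizers {S A : Type} [Fintype S] [Fintype A]
    [Nonempty S] [Nonempty A]
    (P : S → A → S → ℝ) (hP0 : ∀ s a s', 0 ≤ P s a s')
    (hP1 : ∀ s a, (∑ s', P s a s') = 1)
    (r : S → A → ℝ) (α β : ℝ) (hα : 0 < α) (hβ : 0 < β)
    (V₁ V₂ : S → ℝ)
    (h₁ : ∀ V : S → ℝ, Real.log (Zfun P r α β V₁) ≤ Real.log (Zfun P r α β V))
    (h₂ : ∀ V : S → ℝ, Real.log (Zfun P r α β V₂) ≤ Real.log (Zfun P r α β V)) :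
    ∀ (s : S) (a : A), Adv P r V₁ s a = Adv P r V₂ s a := by
  classical
  have hc0 : 0 < α / β := div_pos hα hβ
  set c : ℝ := α / β with hc
  set X : S → A → ℝ := fun s a => Real.exp (Adv P r V₁ s a / α) with hX
  set Y : S → A → ℝ := fun s a => Real.exp (Adv P r V₂ s a / α) with hY
  set Vm : S → ℝ := fun s => (V₁ s + V₂ s) / 2 with hVm
  -- midpoint advantage
  have hAm : ∀ s a, Adv P r Vm s a = (Adv P r V₁ s a + Adv P r V₂ s a) / 2 := by
    intro s a
    simp only [Adv, hVm]
    rw [show (∑ s', (V₁ s' + V₂ s') / 2 * P s a s')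
        = ((∑ s', V₁ s' * P s a s') + (∑ s', V₂ s' * P s a s')) / 2 by
      rw [← Finset.sum_add_distrib, Finset.sum_div]
      exact Finset.sum_congr rfl fun _ _ => by ring]
    ring
  set G₁ : S → ℝ := fun s => ∑ a, X s a with hG₁
  set G₂ : S → ℝ := fun s => ∑ a, Y s a with hG₂
  set Gm : S → ℝ := fun s => ∑ a, Real.exp (Adv P r Vm s a / α) with hGmdef
  have hXpos : ∀ s a, 0 < X s a := fun s a => Real.exp_pos _
  have hYpos : ∀ s a, 0 < Y s a := fun s a => Real.exp_pos _
  have hG₁pos : ∀ s, 0 < G₁ s := fun s =>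
    Finset.sum_pos (fun a _ => hXpos s a) Finset.univ_nonempty
  have hG₂pos : ∀ s, 0 < G₂ s := fun s =>
    Finset.sum_pos (fun a _ => hYpos s a) Finset.univ_nonempty
  have hGmpos : ∀ s, 0 < Gm s := fun s =>
    Finset.sum_pos (fun a _ => Real.exp_pos _) Finset.univ_nonempty
  -- geometric mean expression for Gm
  have hGm : ∀ s, Gm s = ∑ a, Real.sqrt (X s a * Y s a) := by
    intro s
    refine Finset.sum_congr rfl fun a _ => ?_
    rw [hX, hY, ← Real.exp_add, sqrt_exp', hAm]
    congr 1
    ring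
  -- Z expressions
  have hZ1 : Zfun P r α β V₁ = ∑ s, (G₁ s) ^ c := rfl
  have hZ2 : Zfun P r α β V₂ = ∑ s, (G₂ s) ^ c := rfl
  have hZm : Zfun P r α β Vm = ∑ s, (Gm s) ^ c := rfl
  have hZ1pos : 0 < Zfun P r α β V₁ := by
    rw [hZ1]
    exact Finset.sum_pos (fun s _ => Real.rpow_pos_of_pos (hG₁pos s) _) Finset.univ_nonempty
  have hZ2pos : 0 < Zfun P r α β V₂ := by
    rw [hZ2]
    exact Finset.sum_pos (fun s _ => Real.rpow_pos_of_pos (hG₂pos s) _) Finset.univ_nonempty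
  have hZmpos : 0 < Zfun P r α β Vm := by
    rw [hZm]
    exact Finset.sum_pos (fun s _ => Real.rpow_pos_of_pos (hGmpos s) _) Finset.univ_nonempty
  -- Z₁ = Z₂ and Z₁ ≤ Zm
  have hZeq : Zfun P r α β V₁ = Zfun P r α β V₂ :=
    le_antisymm ((Real.log_le_log_iff hZ1pos hZ2pos).mp (h₁ V₂))
      ((Real.log_le_log_iff hZ2pos hZ1pos).mp (h₂ V₁))
  have hZ1leZm : Zfun P r α β V₁ ≤ Zfun P r α β Vm :=
    (Real.log_le_log_iff hZ1pos hZmpos).mp (h₁ Vm)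
  -- pointwise inequalities
  have key1 : ∀ s, (Gm s) ^ c ≤ Real.sqrt ((G₁ s) ^ c * (G₂ s) ^ c) := by
    intro s
    have cs := Finset.sum_mul_sq_le_sq_mul_sq Finset.univ
      (fun a => Real.sqrt (X s a)) (fun a => Real.sqrt (Y s a))
    have hsum1 : ∑ a, Real.sqrt (X s a) ^ 2 = G₁ s :=
      Finset.sum_congr rfl fun a _ => Real.sq_sqrt (hXpos s a).le
    have hsum2 : ∑ a, Real.sqrt (Y s a) ^ 2 = G₂ s :=
      Finset.sum_congr rfl fun a _ => Real.sq_sqrt (hYpos s a).le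
    have hsum3 : ∑ a, Real.sqrt (X s a) * Real.sqrt (Y s a) = Gm s := by
      rw [hGm]
      exact Finset.sum_congr rfl fun a _ => (Real.sqrt_mul (hXpos s a).le _).symm
    rw [hsum1, hsum2, hsum3] at cs
    have hGmle : Gm s ≤ Real.sqrt (G₁ s * G₂ s) :=
      (Real.le_sqrt (hGmpos s).le (mul_nonneg (hG₁pos s).le (hG₂pos s).le)).mpr cs
    calc (Gm s) ^ c ≤ (Real.sqrt (G₁ s * G₂ s)) ^ c :=
          Real.rpow_le_rpow (hGmpos s).le hGmle hc0.le
      _ = Real.sqrt ((G₁ s * G₂ s) ^ c) :=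
          sqrt_rpow' (mul_nonneg (hG₁pos s).le (hG₂pos s).le)
      _ = Real.sqrt ((G₁ s) ^ c * (G₂ s) ^ c) := by
          rw [Real.mul_rpow (hG₁pos s).le (hG₂pos s).le]
  have key2 : ∀ s, Real.sqrt ((G₁ s) ^ c * (G₂ s) ^ c) ≤ ((G₁ s) ^ c + (G₂ s) ^ c) / 2 :=
    fun s => amgm (Real.rpow_pos_of_pos (hG₁pos s) _).le (Real.rpow_pos_of_pos (hG₂pos s) _).le
  -- the squeeze
  have hsum_mid : ∑ s, Real.sqrt ((G₁ s) ^ c * (G₂ s) ^ c)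
      ≤ ∑ s, ((G₁ s) ^ c + (G₂ s) ^ c) / 2 :=
    Finset.sum_le_sum fun s _ => key2 s
  have hsum_top : ∑ s, ((G₁ s) ^ c + (G₂ s) ^ c) / 2 = Zfun P r α β V₁ := by
    rw [hZ1]
    have : ∑ s, ((G₁ s) ^ c + (G₂ s) ^ c) / 2
        = ((∑ s, (G₁ s) ^ c) + ∑ s, (G₂ s) ^ c) / 2 := by
      rw [← Finset.sum_add_distrib, Finset.sum_div]
    rw [this, ← hZ1, ← hZ2, ← hZeq]
    ring
  have hsum_low : Zfun P r α β Vm ≤ ∑ s, Real.sqrt ((G₁ s) ^ c * (G₂ s) ^ c) := by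
    rw [hZm]
    exact Finset.sum_le_sum fun s _ => key1 s
  -- hence all sums are equal
  have hall : ∑ s, (Gm s) ^ c = ∑ s, ((G₁ s) ^ c + (G₂ s) ^ c) / 2 := by
    have h1 : Zfun P r α β Vm ≤ Zfun P r α β V₁ := by
      calc Zfun P r α β Vm ≤ ∑ s, Real.sqrt ((G₁ s) ^ c * (G₂ s) ^ c) := hsum_low
        _ ≤ ∑ s, ((G₁ s) ^ c + (G₂ s) ^ c) / 2 := hsum_mid
        _ = Zfun P r α β V₁ := hsum_top
    have h2 : Zfun P r α β Vm = Zfun P r α β V₁ := le_antisymm h1 hZ1leZm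
    rw [← hZm, h2, ← hsum_top]
  -- pointwise equality Gm^c = (G₁^c + G₂^c)/2
  have hpt : ∀ s, (Gm s) ^ c = ((G₁ s) ^ c + (G₂ s) ^ c) / 2 := by
    have := (Finset.sum_eq_sum_iff_of_le
      (fun s (_ : s ∈ Finset.univ) => le_trans (key1 s) (key2 s))).mp hall
    exact fun s => this s (Finset.mem_univ s)
  -- deduce equality in both inequalities, hence G₁ = G₂ and Gm = G₁
  have hG12 : ∀ s, G₁ s = G₂ s := by
    intro s
    have heq : Real.sqrt ((G₁ s) ^ c * (G₂ s) ^ c) = ((G₁ s) ^ c + (G₂ s) ^ c) / 2 :=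
      le_antisymm (key2 s) (by rw [← hpt s]; exact key1 s)
    have := amgm_eq (Real.rpow_pos_of_pos (hG₁pos s) _).le
      (Real.rpow_pos_of_pos (hG₂pos s) _).le heq
    exact rpow_base_inj (hG₁pos s) (hG₂pos s) hc0 this
  have hGmG : ∀ s, Gm s = G₁ s := by
    intro s
    have h1 : (Gm s) ^ c = (G₁ s) ^ c := by
      rw [hpt s, hG12 s]; ring
    exact rpow_base_inj (hGmpos s) (hG₁pos s) hc0 h1
  -- final pointwise argument over actions
  intro s a
  have hsumeq : ∑ b, Real.sqrt (X s b * Y s b) = ∑ b, (X s b + Y s b) / 2 := by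
    have hr : ∑ b, (X s b + Y s b) / 2 = (G₁ s + G₂ s) / 2 := by
      rw [← Finset.sum_add_distrib, Finset.sum_div]
    rw [hr, ← hGm s, hGmG s, ← hG12 s]
    ring
  have hptA : ∀ b, Real.sqrt (X s b * Y s b) = (X s b + Y s b) / 2 := by
    have := (Finset.sum_eq_sum_iff_of_le
      (fun b (_ : b ∈ Finset.univ) => amgm (hXpos s b).le (hYpos s b).le)).mp hsumeq
    exact fun b => this b (Finset.mem_univ b)
  have hXY : X s a = Y s a := amgm_eq (hXpos s a).le (hYpos s a).le (hptA a)
  have hdiv : Adv P r V₁ s a / α = Adv P r V₂ s a / α := Real.exp_injective hXY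
  field_simp at hdiv
  exact hdiv
end

section
/- Let α > 0 and β > 0. The average total reward R_{α,β} is strictly concave on the set of strictly positive distributions in Δ; that is, for all p, q ∈ Δ with p(s,a) > 0 and q(s,a) > 0 for all (s,a) and p ≠ q, and all t ∈ (0,1), R_{α,β}(t·p + (1−t)·q) > t·R_{α,β}(p) + (1−t)·R_{α,β}(q). -/
open Finset

/-!
Write `P s = ∑ a, p s a`. Since `∑ a, p s a * log (P s) = P s * log (P s)`,
`R_{α,β}(p) = ∑ p r - α ∑ p (log p - log P) - β ∑ P log P`.
The middle sum is jointly convex in `p`: on each pair `(p s a, P s)` it is the perspective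
`X ↦ X φ(x / X)` of the strictly convex `φ u = u log u`. The last sum is strictly convex in the
marginal `P`. If the marginals of `p` and `q` differ the last term is strict; otherwise some
ratio `p s a / P s` differs from `q s a / Q s` and the middle term is strict.
-/

open Real

section MulLog

variable {x y X Y t : ℝ}

lemma mul_log_combo_le (hx : 0 ≤ x) (hy : 0 ≤ y) (ht0 : 0 ≤ t) (ht1 : t ≤ 1) :
    (t * x + (1 - t) * y) * log (t * x + (1 - t) * y)
      ≤ t * (x * log x) + (1 - t) * (y * log y) :=
  convexOn_mul_log.2 hx hy ht0 (sub_nonneg.2 ht1) (add_sub_cancel t 1)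

lemma mul_log_combo_lt (hx : 0 ≤ x) (hy : 0 ≤ y) (hxy : x ≠ y) (ht0 : 0 < t) (ht1 : t < 1) :
    (t * x + (1 - t) * y) * log (t * x + (1 - t) * y)
      < t * (x * log x) + (1 - t) * (y * log y) :=
  strictConvexOn_mul_log.2 hx hy hxy ht0 (sub_pos.2 ht1) (add_sub_cancel t 1)

lemma mul_log_sub_log_eq (hx : 0 < x) (hX : 0 < X) :
    x * (log x - log X) = X * (x / X * log (x / X)) := by
  rw [log_div hx.ne' hX.ne']
  field_simp

lemma mul_log_sub_log_combo_eq (hx : 0 < x) (hX : 0 < X) (hy : 0 < y) (hY : 0 < Y)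
    (ht0 : 0 < t) (ht1 : t < 1) :
    let M := t * X + (1 - t) * Y
    let w := t * X / M
    (t * x + (1 - t) * y) * (log (t * x + (1 - t) * y) - log M)
        = M * ((w * (x / X) + (1 - w) * (y / Y)) * log (w * (x / X) + (1 - w) * (y / Y))) ∧
      t * (x * (log x - log X)) + (1 - t) * (y * (log y - log Y))
        = M * (w * (x / X * log (x / X)) + (1 - w) * (y / Y * log (y / Y))) := by
  intro M w
  have h1t : 0 < 1 - t := sub_pos.2 ht1
  have hM : 0 < M := by positivity
  have hratio : (t * x + (1 - t) * y) / M = w * (x / X) + (1 - w) * (y / Y) := by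
    simp only [w]
    field_simp
    ring
  refine ⟨?_, ?_⟩
  · rw [mul_log_sub_log_eq (by positivity) hM, hratio]
  · rw [mul_log_sub_log_eq hx hX, mul_log_sub_log_eq hy hY]
    simp only [w]
    field_simp
    ring

lemma mul_log_sub_log_combo_le (hx : 0 < x) (hX : 0 < X) (hy : 0 < y) (hY : 0 < Y)
    (ht0 : 0 < t) (ht1 : t < 1) :
    (t * x + (1 - t) * y) * (log (t * x + (1 - t) * y) - log (t * X + (1 - t) * Y))
      ≤ t * (x * (log x - log X)) + (1 - t) * (y * (log y - log Y)) := by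
  obtain ⟨hlhs, hrhs⟩ := mul_log_sub_log_combo_eq hx hX hy hY ht0 ht1
  have h1t : 0 < 1 - t := sub_pos.2 ht1
  rw [hlhs, hrhs]
  refine mul_le_mul_of_nonneg_left (mul_log_combo_le (by positivity) (by positivity)
    (by positivity) ?_) (by positivity)
  exact div_le_one_of_le₀ (by nlinarith) (by positivity)

lemma mul_log_sub_log_combo_lt (hx : 0 < x) (hX : 0 < X) (hy : 0 < y) (hY : 0 < Y)
    (ht0 : 0 < t) (ht1 : t < 1) (hratio : x / X ≠ y / Y) :
    (t * x + (1 - t) * y) * (log (t * x + (1 - t) * y) - log (t * X + (1 - t) * Y))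
      < t * (x * (log x - log X)) + (1 - t) * (y * (log y - log Y)) := by
  obtain ⟨hlhs, hrhs⟩ := mul_log_sub_log_combo_eq hx hX hy hY ht0 ht1
  have h1t : 0 < 1 - t := sub_pos.2 ht1
  rw [hlhs, hrhs]
  refine mul_lt_mul_of_pos_left (mul_log_combo_lt (by positivity) (by positivity) hratio
    (by positivity) ?_) (by positivity)
  exact (div_lt_one (by positivity)).2 (by nlinarith)

end MulLog

section Penalty

variable {A : Type} [Fintype A]

noncomputable def condNegEntropy (x : A → ℝ) : ℝ :=
  ∑ a, x a * (log (x a) - log (∑ b, x b))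

noncomputable def entropyPenalty (α β : ℝ) (x : A → ℝ) : ℝ :=
  α * condNegEntropy x + β * ((∑ a, x a) * log (∑ a, x a))

variable {x y : A → ℝ} {t : ℝ}

lemma sum_combo (x y : A → ℝ) (t : ℝ) :
    ∑ a, (t * x a + (1 - t) * y a) = t * ∑ a, x a + (1 - t) * ∑ a, y a := by
  rw [sum_add_distrib, mul_sum, mul_sum]

lemma combo_condNegEntropy_eq_sum (x y : A → ℝ) (t : ℝ) :
    t * condNegEntropy x + (1 - t) * condNegEntropy y
      = ∑ a, (t * (x a * (log (x a) - log (∑ b, x b)))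
          + (1 - t) * (y a * (log (y a) - log (∑ b, y b)))) := by
  rw [condNegEntropy, condNegEntropy, sum_add_distrib, mul_sum, mul_sum]

lemma condNegEntropy_combo_term_le (hx : ∀ a, 0 < x a) (hy : ∀ a, 0 < y a)
    (ht0 : 0 < t) (ht1 : t < 1) (a : A) :
    (t * x a + (1 - t) * y a)
        * (log (t * x a + (1 - t) * y a) - log (t * ∑ b, x b + (1 - t) * ∑ b, y b))
      ≤ t * (x a * (log (x a) - log (∑ b, x b)))
          + (1 - t) * (y a * (log (y a) - log (∑ b, y b))) :=
  mul_log_sub_log_combo_le (hx a) (sum_pos (fun b _ => hx b) ⟨a, mem_univ a⟩) (hy a)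
    (sum_pos (fun b _ => hy b) ⟨a, mem_univ a⟩) ht0 ht1

lemma condNegEntropy_combo_le (hx : ∀ a, 0 < x a) (hy : ∀ a, 0 < y a)
    (ht0 : 0 < t) (ht1 : t < 1) :
    condNegEntropy (fun a => t * x a + (1 - t) * y a)
      ≤ t * condNegEntropy x + (1 - t) * condNegEntropy y := by
  rw [condNegEntropy, sum_combo, combo_condNegEntropy_eq_sum]
  exact sum_le_sum fun a _ => condNegEntropy_combo_term_le hx hy ht0 ht1 a

lemma condNegEntropy_combo_lt (hx : ∀ a, 0 < x a) (hy : ∀ a, 0 < y a)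
    (ht0 : 0 < t) (ht1 : t < 1) {a₀ : A} (ha₀ : x a₀ / ∑ b, x b ≠ y a₀ / ∑ b, y b) :
    condNegEntropy (fun a => t * x a + (1 - t) * y a)
      < t * condNegEntropy x + (1 - t) * condNegEntropy y := by
  rw [condNegEntropy, sum_combo, combo_condNegEntropy_eq_sum]
  refine sum_lt_sum (fun a _ => condNegEntropy_combo_term_le hx hy ht0 ht1 a)
    ⟨a₀, mem_univ a₀, mul_log_sub_log_combo_lt (hx a₀) ?_ (hy a₀) ?_ ht0 ht1 ha₀⟩
  · exact sum_pos (fun b _ => hx b) ⟨a₀, mem_univ a₀⟩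
  · exact sum_pos (fun b _ => hy b) ⟨a₀, mem_univ a₀⟩

lemma entropyPenalty_combo_le {α β : ℝ} (hα : 0 ≤ α) (hβ : 0 ≤ β)
    (hx : ∀ a, 0 < x a) (hy : ∀ a, 0 < y a) (ht0 : 0 < t) (ht1 : t < 1) :
    entropyPenalty α β (fun a => t * x a + (1 - t) * y a)
      ≤ t * entropyPenalty α β x + (1 - t) * entropyPenalty α β y := by
  have hX : 0 ≤ ∑ a, x a := sum_nonneg fun a _ => (hx a).le
  have hY : 0 ≤ ∑ a, y a := sum_nonneg fun a _ => (hy a).le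
  have hcond := mul_le_mul_of_nonneg_left (condNegEntropy_combo_le hx hy ht0 ht1) hα
  have hmarg := mul_le_mul_of_nonneg_left (mul_log_combo_le hX hY ht0.le ht1.le) hβ
  rw [entropyPenalty, entropyPenalty, entropyPenalty, sum_combo]
  linarith

lemma entropyPenalty_combo_lt {α β : ℝ} (hα : 0 < α) (hβ : 0 < β)
    (hx : ∀ a, 0 < x a) (hy : ∀ a, 0 < y a) (ht0 : 0 < t) (ht1 : t < 1) (hxy : x ≠ y) :
    entropyPenalty α β (fun a => t * x a + (1 - t) * y a)
      < t * entropyPenalty α β x + (1 - t) * entropyPenalty α β y := by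
  obtain ⟨a₀, ha₀⟩ := Function.ne_iff.1 hxy
  have hX : 0 ≤ ∑ a, x a := sum_nonneg fun a _ => (hx a).le
  have hY : 0 ≤ ∑ a, y a := sum_nonneg fun a _ => (hy a).le
  rw [entropyPenalty, entropyPenalty, entropyPenalty, sum_combo]
  by_cases hXY : ∑ a, x a = ∑ a, y a
  · have hY₀ : ∑ a, y a ≠ 0 := (sum_pos (fun b _ => hy b) ⟨a₀, mem_univ a₀⟩).ne'
    have hratio : x a₀ / ∑ b, x b ≠ y a₀ / ∑ b, y b := by rwa [hXY, Ne, div_left_inj' hY₀]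
    have hcond := mul_lt_mul_of_pos_left (condNegEntropy_combo_lt hx hy ht0 ht1 hratio) hα
    have hmarg := mul_le_mul_of_nonneg_left (mul_log_combo_le hX hY ht0.le ht1.le) hβ.le
    linarith
  · have hcond := mul_le_mul_of_nonneg_left (condNegEntropy_combo_le hx hy ht0 ht1) hα.le
    have hmarg := mul_lt_mul_of_pos_left (mul_log_combo_lt hX hY hXY ht0 ht1) hβ
    linarith

end Penalty

lemma Ravg_eq_sum_sub_entropyPenalty {S A : Type} [Fintype S] [Fintype A]
    (r : S → A → ℝ) (α β : ℝ) (p : S → A → ℝ) :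
    Ravg r α β p = ∑ s, ∑ a, p s a * r s a - ∑ s, entropyPenalty α β (p s) := by
  simp only [Ravg, entropyPenalty, condNegEntropy, mul_sub, sum_sub_distrib, ← sum_mul,
    sum_add_distrib, ← mul_sum]
  ring

theorem Ravg_strictConcave_on_pos_general {S A : Type} [Fintype S] [Fintype A]
    (r : S → A → ℝ) (α β : ℝ) (hα : 0 < α) (hβ : 0 < β)
    (p q : S → A → ℝ)
    (hp0 : ∀ s a, 0 < p s a)
    (hq0 : ∀ s a, 0 < q s a)
    (hpq : p ≠ q)
    (t : ℝ) (ht0 : 0 < t) (ht1 : t < 1) :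
    Ravg r α β (fun s a => t * p s a + (1 - t) * q s a)
      > t * Ravg r α β p + (1 - t) * Ravg r α β q := by
  simp only [Ravg_eq_sum_sub_entropyPenalty]
  have hreward : ∑ s, ∑ a, (t * p s a + (1 - t) * q s a) * r s a
      = t * ∑ s, ∑ a, p s a * r s a + (1 - t) * ∑ s, ∑ a, q s a * r s a := by
    simp only [add_mul, sum_add_distrib, mul_sum, mul_assoc]
  obtain ⟨s₀, hs₀⟩ := Function.ne_iff.1 hpq
  have hpenalty : ∑ s, entropyPenalty α β (fun a => t * p s a + (1 - t) * q s a)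
      < t * ∑ s, entropyPenalty α β (p s) + (1 - t) * ∑ s, entropyPenalty α β (q s) := by
    rw [mul_sum, mul_sum, ← sum_add_distrib]
    exact sum_lt_sum (fun s _ => entropyPenalty_combo_le hα.le hβ.le (hp0 s) (hq0 s) ht0 ht1)
      ⟨s₀, mem_univ s₀, entropyPenalty_combo_lt hα hβ (hp0 s₀) (hq0 s₀) ht0 ht1 hs₀⟩
  linarith

/-- for `α > 0`, `β > 0`, the average total reward is strictly
concave on the set of strictly positive distributions in `Δ`. -/
theorem Ravg_strictConcave_on_pos {S A : Type} [Fintype S] [Fintype A]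
    [Nonempty S] [Nonempty A]
    (r : S → A → ℝ) (α β : ℝ) (hα : 0 < α) (hβ : 0 < β)
    (p q : S → A → ℝ)
    (hp0 : ∀ s a, 0 < p s a) (hp1 : (∑ s, ∑ a, p s a) = 1)
    (hq0 : ∀ s a, 0 < q s a) (hq1 : (∑ s, ∑ a, q s a) = 1)
    (hpq : p ≠ q)
    (t : ℝ) (ht0 : 0 < t) (ht1 : t < 1) :
    Ravg r α β (fun s a => t * p s a + (1 - t) * q s a)
      > t * Ravg r α β p + (1 - t) * Ravg r α β q :=
  Ravg_strictConcave_on_pos_general r α β hα hβ p q hp0 hq0 hpq t ht0 ht1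
end

section
/- Let α, β ∈ ℝ, let p : S × A → ℝ satisfy p(s,a) > 0 for all (s,a), and let u : S × A → ℝ be arbitrary. Define G(η) = Σ_{s,a} (p(s,a) + η u(s,a)) r(s,a) − α Σ_{s,a} (p(s,a) + η u(s,a)) log (p(s,a) + η u(s,a)) − (β − α) Σ_{s,a} (p(s,a) + η u(s,a)) log ( Σ_b (p(s,b) + η u(s,b)) ) for η in a neighborhood of 0 where all the arguments of the logarithms are positive. Then G is twice differentiable at η = 0 and G''(0) = −α Σ_s ( Σ_a u(s,a)²/p(s,a) − (Σ_a u(s,a))²/(Σ_a p(s,a)) ) − β Σ_s (Σ_a u(s,a))²/(Σ_a p(s,a)). -/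
/-!
Along the line `η ↦ p + η u` every argument of a logarithm is affine in `η`, and the
`log (∑ b, …)` term collapses to `(P + η U) log (P + η U)` with `P = ∑ a, p s a`,
`U = ∑ a, u s a`. Since `(x log x)'' = 1 / x`, each term `(c + η d) log (c + η d)` contributes
`d ^ 2 / c` to the second derivative at `0`, and the reward term is affine, so contributes nothing.
-/

open Finset Filter Topology

section HasSecondDerivAt

variable {𝕜 : Type*} [NontriviallyNormedField 𝕜] {F : Type*} [NormedAddCommGroup F]
  [NormedSpace 𝕜 F]

def HasSecondDerivAt (f : 𝕜 → F) (f'' : F) (x : 𝕜) : Prop :=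
  ∃ f' : 𝕜 → F, (∀ᶠ y in 𝓝 x, HasDerivAt f (f' y) y) ∧ HasDerivAt f' f'' x

namespace HasSecondDerivAt

variable {f g : 𝕜 → F} {f'' g'' : F} {x : 𝕜}

theorem differentiableAt (h : HasSecondDerivAt f f'' x) : DifferentiableAt 𝕜 f x :=
  let ⟨_, hf, _⟩ := h
  hf.self_of_nhds.differentiableAt

theorem hasDerivAt_deriv (h : HasSecondDerivAt f f'' x) : HasDerivAt (deriv f) f'' x :=
  let ⟨_, hf, hf'⟩ := h
  hf'.congr_of_eventuallyEq (hf.mono fun _ hy => hy.deriv)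

theorem differentiableAt_deriv (h : HasSecondDerivAt f f'' x) :
    DifferentiableAt 𝕜 (deriv f) x :=
  h.hasDerivAt_deriv.differentiableAt

theorem deriv_deriv (h : HasSecondDerivAt f f'' x) : deriv (deriv f) x = f'' :=
  h.hasDerivAt_deriv.deriv

theorem add (hf : HasSecondDerivAt f f'' x) (hg : HasSecondDerivAt g g'' x) :
    HasSecondDerivAt (fun y => f y + g y) (f'' + g'') x :=
  let ⟨f', hf, hf'⟩ := hf
  let ⟨g', hg, hg'⟩ := hg
  ⟨fun y => f' y + g' y, (hf.and hg).mono fun _ h => h.1.add h.2, hf'.add hg'⟩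

theorem sub (hf : HasSecondDerivAt f f'' x) (hg : HasSecondDerivAt g g'' x) :
    HasSecondDerivAt (fun y => f y - g y) (f'' - g'') x :=
  let ⟨f', hf, hf'⟩ := hf
  let ⟨g', hg, hg'⟩ := hg
  ⟨fun y => f' y - g' y, (hf.and hg).mono fun _ h => h.1.sub h.2, hf'.sub hg'⟩

theorem sum {ι : Type*} {s : Finset ι} {f : ι → 𝕜 → F} {f'' : ι → F}
    (h : ∀ i ∈ s, HasSecondDerivAt (f i) (f'' i) x) :
    HasSecondDerivAt (fun y => ∑ i ∈ s, f i y) (∑ i ∈ s, f'' i) x := by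
  choose! f' hf hf' using h
  exact ⟨fun y => ∑ i ∈ s, f' i y,
    ((eventually_all_finset s).2 hf).mono fun _ h => HasDerivAt.fun_sum h,
    HasDerivAt.fun_sum hf'⟩

theorem const_mul {𝔸 : Type*} [NormedRing 𝔸] [NormedAlgebra 𝕜 𝔸] {f : 𝕜 → 𝔸} {f'' : 𝔸}
    (c : 𝔸) (h : HasSecondDerivAt f f'' x) :
    HasSecondDerivAt (fun y => c * f y) (c * f'') x :=
  let ⟨f', hf, hf'⟩ := h
  ⟨fun y => c * f' y, hf.mono fun _ h => h.const_mul c, hf'.const_mul c⟩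

end HasSecondDerivAt

theorem hasSecondDerivAt_affine_mul_const (c d r x : 𝕜) :
    HasSecondDerivAt (fun y => (c + y * d) * r) 0 x :=
  ⟨fun _ => d * r,
    Eventually.of_forall fun y => by
      simpa using (((hasDerivAt_id y).mul_const d).const_add c).mul_const r,
    hasDerivAt_const x _⟩

end HasSecondDerivAt

theorem Real.hasSecondDerivAt_affine_mul_log {c : ℝ} (hc : c ≠ 0) (d : ℝ) :
    HasSecondDerivAt (fun y => (c + y * d) * log (c + y * d)) (d ^ 2 / c) 0 := by
  have hline : ∀ y : ℝ, HasDerivAt (fun y => c + y * d) d y := fun y => by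
    simpa using ((hasDerivAt_id y).mul_const d).const_add c
  have hne : ∀ᶠ y in 𝓝 (0 : ℝ), c + y * d ≠ 0 :=
    (hline 0).continuousAt.eventually_ne (by simpa using hc)
  refine ⟨fun y => d * (log (c + y * d) + 1), hne.mono fun y hy => ?_, ?_⟩
  · exact ((hasDerivAt_mul_log hy).comp y (hline y)).congr_deriv (mul_comm _ _)
  · refine ((((hasDerivAt_log (by simpa using hc)).comp 0 (hline 0)).add_const 1).const_mul
      d).congr_deriv ?_
    rw [zero_mul, add_zero]
    ring

theorem second_directional_derivative_general {S A : Type} [Fintype S] [Fintype A]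
    [Nonempty A]
    (r : S → A → ℝ) (α β : ℝ)
    (p u : S → A → ℝ) (hp : ∀ s a, 0 < p s a)
    (G : ℝ → ℝ)
    (hG : ∀ η : ℝ, G η =
      (∑ s, ∑ a, (p s a + η * u s a) * r s a)
        - α * ∑ s, ∑ a, (p s a + η * u s a) * Real.log (p s a + η * u s a)
        - (β - α) * ∑ s, ∑ a, (p s a + η * u s a) *
            Real.log (∑ b, (p s b + η * u s b))) :
    (DifferentiableAt ℝ G 0 ∧ DifferentiableAt ℝ (deriv G) 0) ∧
      deriv (deriv G) 0 =
        -α * (∑ s, ((∑ a, (u s a) ^ 2 / p s a)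
            - (∑ a, u s a) ^ 2 / (∑ a, p s a)))
          - β * ∑ s, (∑ a, u s a) ^ 2 / (∑ a, p s a) := by
  have hP : ∀ s, ∑ a, p s a ≠ 0 := fun s => (sum_pos (fun a _ => hp s a) univ_nonempty).ne'
  have hG' : G = fun η => (∑ s, ∑ a, (p s a + η * u s a) * r s a)
      - α * ∑ s, ∑ a, (p s a + η * u s a) * Real.log (p s a + η * u s a)
      - (β - α) * ∑ s, (∑ a, p s a + η * ∑ a, u s a) *
          Real.log (∑ a, p s a + η * ∑ a, u s a) := by
    funext η
    simp only [hG, ← sum_mul, sum_add_distrib, ← mul_sum]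
  have h : HasSecondDerivAt G _ 0 := hG' ▸
    ((HasSecondDerivAt.sum fun s _ => HasSecondDerivAt.sum fun a _ =>
        hasSecondDerivAt_affine_mul_const (p s a) (u s a) (r s a) 0).sub
      ((HasSecondDerivAt.sum fun s _ => HasSecondDerivAt.sum fun a _ =>
        Real.hasSecondDerivAt_affine_mul_log (hp s a).ne' (u s a)).const_mul α)).sub
      ((HasSecondDerivAt.sum fun s _ =>
        Real.hasSecondDerivAt_affine_mul_log (hP s) (∑ a, u s a)).const_mul (β - α))
  refine ⟨⟨h.differentiableAt, h.differentiableAt_deriv⟩, ?_⟩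
  rw [h.deriv_deriv]
  simp only [sum_const_zero, sum_sub_distrib]
  ring

/-- the second directional derivative of the average total reward
along a direction `u` from a strictly positive `p`. `G` is twice differentiable
at `η = 0` and `G''(0)` has the stated value. -/
theorem second_directional_derivative {S A : Type} [Fintype S] [Fintype A]
    [Nonempty S] [Nonempty A]
    (r : S → A → ℝ) (α β : ℝ)
    (p u : S → A → ℝ) (hp : ∀ s a, 0 < p s a)
    (G : ℝ → ℝ)
    (hG : ∀ η : ℝ, G η =
      (∑ s, ∑ a, (p s a + η * u s a) * r s a)
        - α * ∑ s, ∑ a, (p s a + η * u s a) * Real.log (p s a + η * u s a)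
        - (β - α) * ∑ s, ∑ a, (p s a + η * u s a) *
            Real.log (∑ b, (p s b + η * u s b))) :
    (DifferentiableAt ℝ G 0 ∧ DifferentiableAt ℝ (deriv G) 0) ∧
      deriv (deriv G) 0 =
        -α * (∑ s, ((∑ a, (u s a) ^ 2 / p s a)
            - (∑ a, u s a) ^ 2 / (∑ a, p s a)))
          - β * ∑ s, (∑ a, u s a) ^ 2 / (∑ a, p s a) :=
  second_directional_derivative_general r α β p u hp G hG
end

section
/- Fix β > 0 and a function B : S × A → ℝ. Then lim_{α → 0⁺} β · log ( Σ_s (Σ_a exp(B(s,a)/α))^{α/β} ) = β · log ( Σ_s exp( (max_a B(s,a)) / β ) ); i.e., as α → 0⁺ the dual function β log Z_V converges pointwise to β log ( Σ_s exp( max_a A_V(s,a) / β ) ). -/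
open Finset

lemma aux_log_sum_tendsto {A : Type} [Fintype A] [Nonempty A] (B : A → ℝ) :
    Filter.Tendsto (fun α : ℝ => α * Real.log (∑ a, Real.exp (B a / α)))
      (nhdsWithin 0 (Set.Ioi 0)) (nhds (⨆ a, B a)) := by
  obtain ⟨a0, ha0⟩ := Finite.exists_max B
  have hM : (⨆ a, B a) = B a0 :=
    le_antisymm (ciSup_le ha0)
      (le_ciSup (Set.Finite.bddAbove (Set.finite_range B)) a0)
  rw [hM]
  set M := B a0 with hMdef
  have hposSum : ∀ α : ℝ, (0:ℝ) < ∑ a, Real.exp (B a / α) := fun α =>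
    Finset.sum_pos (fun a _ => Real.exp_pos _) Finset.univ_nonempty
  have hlow : ∀ α ∈ Set.Ioi (0:ℝ),
      M ≤ α * Real.log (∑ a, Real.exp (B a / α)) := by
    intro α hα
    have h1 : Real.exp (M / α) ≤ ∑ a, Real.exp (B a / α) :=
      Finset.single_le_sum (f := fun a => Real.exp (B a / α))
        (fun a _ => (Real.exp_pos _).le) (Finset.mem_univ a0)
    have h2 : M / α ≤ Real.log (∑ a, Real.exp (B a / α)) := by
      have := Real.log_le_log (Real.exp_pos _) h1
      rwa [Real.log_exp] at this
    calc M = α * (M / α) := by rw [mul_comm, div_mul_cancel₀ M (ne_of_gt hα)]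
      _ ≤ α * Real.log (∑ a, Real.exp (B a / α)) := by
          exact mul_le_mul_of_nonneg_left h2 (le_of_lt hα)
  have hup : ∀ α ∈ Set.Ioi (0:ℝ),
      α * Real.log (∑ a, Real.exp (B a / α))
        ≤ α * Real.log (Fintype.card A) + M := by
    intro α hα
    have h1 : (∑ a, Real.exp (B a / α)) ≤ (Fintype.card A : ℝ) * Real.exp (M / α) := by
      calc (∑ a, Real.exp (B a / α)) ≤ ∑ _a : A, Real.exp (M / α) := by
            apply Finset.sum_le_sum
            intro a _
            apply Real.exp_le_exp.mpr
            exact div_le_div_of_nonneg_right (ha0 a) (le_of_lt hα)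
        _ = (Fintype.card A : ℝ) * Real.exp (M / α) := by
            rw [Finset.sum_const, Finset.card_univ, nsmul_eq_mul]
    have hcard : (0:ℝ) < (Fintype.card A : ℝ) := by
      exact_mod_cast Fintype.card_pos
    have h2 : Real.log (∑ a, Real.exp (B a / α))
        ≤ Real.log (Fintype.card A) + M / α := by
      have := Real.log_le_log (hposSum α) h1
      rwa [Real.log_mul (ne_of_gt hcard) (ne_of_gt (Real.exp_pos _)),
        Real.log_exp] at this
    calc α * Real.log (∑ a, Real.exp (B a / α))
        ≤ α * (Real.log (Fintype.card A) + M / α) :=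
          mul_le_mul_of_nonneg_left h2 (le_of_lt hα)
      _ = α * Real.log (Fintype.card A) + M := by
          rw [mul_add, mul_comm α (M / α), div_mul_cancel₀ M (ne_of_gt hα)]
  have hid : Filter.Tendsto (fun α : ℝ => α) (nhdsWithin 0 (Set.Ioi 0)) (nhds 0) :=
    Filter.tendsto_id.mono_left nhdsWithin_le_nhds
  have hupper : Filter.Tendsto (fun α : ℝ => α * Real.log (Fintype.card A) + M)
      (nhdsWithin 0 (Set.Ioi 0)) (nhds M) := by
    have h := (hid.mul_const (Real.log (Fintype.card A))).add_const M
    rw [zero_mul, zero_add] at h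
    exact h
  refine tendsto_of_tendsto_of_tendsto_of_le_of_le' tendsto_const_nhds hupper ?_ ?_
  · filter_upwards [self_mem_nhdsWithin] with α hα using hlow α hα
  · filter_upwards [self_mem_nhdsWithin] with α hα using hup α hα

/-- as `α → 0⁺`, the dual function
`β log ( Σ_s (Σ_a exp(B(s,a)/α))^{α/β} )` converges to
`β log ( Σ_s exp( (max_a B(s,a)) / β ) )`. -/
theorem dual_limit_alpha_zero {S A : Type} [Fintype S] [Fintype A]
    [Nonempty S] [Nonempty A]
    (β : ℝ) (hβ : 0 < β) (B : S → A → ℝ) :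
    Filter.Tendsto
      (fun α : ℝ =>
        β * Real.log (∑ s, (∑ a, Real.exp (B s a / α)) ^ (α / β)))
      (nhdsWithin 0 (Set.Ioi 0))
      (nhds (β * Real.log (∑ s, Real.exp ((⨆ a, B s a) / β)))) := by
  have hposSum : ∀ (s : S) (α : ℝ), (0:ℝ) < ∑ a, Real.exp (B s a / α) := fun s α =>
    Finset.sum_pos (fun a _ => Real.exp_pos _) Finset.univ_nonempty
  have hterm : ∀ s : S, Filter.Tendsto
      (fun α : ℝ => (∑ a, Real.exp (B s a / α)) ^ (α / β))
      (nhdsWithin 0 (Set.Ioi 0)) (nhds (Real.exp ((⨆ a, B s a) / β))) := by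
    intro s
    have heq : ∀ α : ℝ, (∑ a, Real.exp (B s a / α)) ^ (α / β)
        = Real.exp ((α * Real.log (∑ a, Real.exp (B s a / α))) / β) := by
      intro α
      rw [Real.rpow_def_of_pos (hposSum s α)]
      congr 1
      ring
    simp only [heq]
    exact (Real.continuous_exp.tendsto _).comp
      ((aux_log_sum_tendsto (B s)).div_const β)
  have hsum : Filter.Tendsto
      (fun α : ℝ => ∑ s, (∑ a, Real.exp (B s a / α)) ^ (α / β))
      (nhdsWithin 0 (Set.Ioi 0))
      (nhds (∑ s, Real.exp ((⨆ a, B s a) / β))) :=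
    tendsto_finset_sum _ (fun s _ => hterm s)
  have hpos : (0:ℝ) < ∑ s, Real.exp ((⨆ a, B s a) / β) :=
    Finset.sum_pos (fun s _ => Real.exp_pos _) Finset.univ_nonempty
  exact ((Real.continuousAt_log (ne_of_gt hpos)).tendsto.comp hsum).const_mul β
end

section
/- Let α > 0. Define the pure action-entropy objective R_{α,0}(p) = Σ_{s,a} p(s,a) r(s,a) − α Σ_{s,a} p(s,a) log ( p(s,a) / Σ_b p(s,b) ), where terms with p(s,a) = 0 are set to 0. If p ∈ D, V : S → ℝ and η ∈ ℝ satisfy α · log ( Σ_a exp(A_V(s,a)/α) ) ≤ η for every s ∈ S, then R_{α,0}(p) ≤ η. -/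
open Finset

lemma per_state {A : Type} [Fintype A] [Nonempty A] (α : ℝ) (hα : 0 < α)
    (q : A → ℝ) (hq : ∀ a, 0 ≤ q a) (f : A → ℝ) :
    ∑ a, (q a * f a - α * (q a * Real.log (q a / ∑ b, q b)))
      ≤ (∑ b, q b) * (α * Real.log (∑ a, Real.exp (f a / α))) := by
  set μ := ∑ b, q b with hμ
  have hμ0 : 0 ≤ μ := Finset.sum_nonneg fun b _ => hq b
  set Z := ∑ a, Real.exp (f a / α) with hZ
  have hZpos : 0 < Z := Finset.sum_pos (fun a _ => Real.exp_pos _) Finset.univ_nonempty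
  have key : ∀ a : A, q a * f a - α * (q a * Real.log (q a / μ))
      ≤ α * (q a * Real.log Z) + α * (μ * Real.exp (f a / α) / Z) - α * q a := by
    intro a
    rcases eq_or_lt_of_le (hq a) with h0 | hpos
    · rw [← h0]
      have : 0 ≤ α * (μ * Real.exp (f a / α) / Z) := by positivity
      simp
      linarith
    · have hμpos : 0 < μ := lt_of_lt_of_le hpos (Finset.single_le_sum (fun b _ => hq b) (Finset.mem_univ a))
      have hx : 0 < Real.exp (f a / α) * μ / (Z * q a) := by positivity
      have hlog := Real.log_le_sub_one_of_pos hx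
      have hlogeq : Real.log (Real.exp (f a / α) * μ / (Z * q a))
          = f a / α + Real.log μ - Real.log Z - Real.log (q a) := by
        rw [Real.log_div (by positivity) (by positivity), Real.log_mul (Real.exp_ne_zero _) (ne_of_gt hμpos),
          Real.log_mul (ne_of_gt hZpos) (ne_of_gt hpos), Real.log_exp]
        ring
      have hqlog : Real.log (q a / μ) = Real.log (q a) - Real.log μ :=
        Real.log_div (ne_of_gt hpos) (ne_of_gt hμpos)
      -- multiply hlog by α * q a
      have h2 : α * q a * Real.log (Real.exp (f a / α) * μ / (Z * q a))
          ≤ α * q a * (Real.exp (f a / α) * μ / (Z * q a) - 1) := by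
        apply mul_le_mul_of_nonneg_left hlog (by positivity)
      rw [hlogeq] at h2
      have h3 : α * q a * (Real.exp (f a / α) * μ / (Z * q a) - 1)
          = α * (μ * Real.exp (f a / α) / Z) - α * q a := by
        field_simp
      rw [h3] at h2
      have h4 : α * q a * (f a / α + Real.log μ - Real.log Z - Real.log (q a))
          = q a * f a - α * (q a * Real.log (q a / μ)) - α * (q a * Real.log Z) := by
        rw [hqlog]; field_simp; ring
      rw [h4] at h2
      linarith
  calc ∑ a, (q a * f a - α * (q a * Real.log (q a / μ)))
      ≤ ∑ a, (α * (q a * Real.log Z) + α * (μ * Real.exp (f a / α) / Z) - α * q a) :=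
        Finset.sum_le_sum fun a _ => key a
    _ = α * μ * Real.log Z + α * μ * (Z / Z) - α * μ := by
        rw [Finset.sum_sub_distrib, Finset.sum_add_distrib, ← Finset.mul_sum, ← Finset.mul_sum,
          ← Finset.mul_sum, ← hμ]
        have : ∑ a, μ * Real.exp (f a / α) / Z = μ * Z / Z := by
          rw [← Finset.sum_div, ← Finset.mul_sum, ← hZ]
        rw [this]
        have h5 : ∑ i : A, q i * Real.log Z = μ * Real.log Z := by
          rw [← Finset.sum_mul, ← hμ]
        rw [h5]; ring
    _ = μ * (α * Real.log Z) := by rw [div_self (ne_of_gt hZpos)]; ring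


/-- weak duality for the pure action-entropy objective
`R_{α,0}(p) = Σ p r − α Σ p log(p(s,a)/Σ_b p(s,b))`: if
`α log Σ_a exp(A_V(s,a)/α) ≤ η` for all `s`, then `R_{α,0}(p) ≤ η` for `p ∈ D`. -/
theorem pure_action_entropy_weak_duality {S A : Type} [Fintype S] [Fintype A]
    [Nonempty S] [Nonempty A]
    (P : S → A → S → ℝ) (hP0 : ∀ s a s', 0 ≤ P s a s')
    (hP1 : ∀ s a, (∑ s', P s a s') = 1)
    (r : S → A → ℝ) (α : ℝ) (hα : 0 < α)
    (p : S → A → ℝ) (hp : p ∈ Dset P)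
    (V : S → ℝ) (η : ℝ)
    (hη : ∀ s : S, α * Real.log (∑ a, Real.exp (Adv P r V s a / α)) ≤ η) :
    (∑ s, ∑ a, p s a * r s a)
        - α * ∑ s, ∑ a, p s a * Real.log (p s a / ∑ b, p s b) ≤ η := by
  obtain ⟨hp0, hp1, hpD⟩ := hp
  -- step 1: ∑∑ p·r = ∑∑ p·Adv
  have hT : ∑ s, ∑ a, p s a * (∑ s', V s' * P s a s') = ∑ s, ∑ a, p s a * V s := by
    have h1 : ∀ s : S, ∀ a : A, p s a * (∑ s', V s' * P s a s')
        = ∑ s', V s' * (P s a s' * p s a) := by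
      intro s a; rw [Finset.mul_sum]
      exact Finset.sum_congr rfl fun s' _ => by ring
    simp_rw [h1]
    have h2 : ∀ s : S, ∑ a, ∑ s', V s' * (P s a s' * p s a)
        = ∑ s', ∑ a, V s' * (P s a s' * p s a) := fun s => by rw [Finset.sum_comm]
    simp_rw [h2]
    rw [Finset.sum_comm]
    have h3 : ∀ s' : S, ∑ s, ∑ a, V s' * (P s a s' * p s a)
        = V s' * ∑ s, ∑ a, P s a s' * p s a := by
      intro s'
      rw [Finset.mul_sum]
      exact Finset.sum_congr rfl fun s _ => by rw [Finset.mul_sum]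
    simp_rw [h3, hpD]
    exact Finset.sum_congr rfl fun s _ => by
      rw [Finset.mul_sum]
      exact Finset.sum_congr rfl fun b _ => by ring
  have hadv : ∑ s, ∑ a, p s a * r s a = ∑ s, ∑ a, p s a * Adv P r V s a := by
    simp only [Adv, mul_sub, mul_add, Finset.sum_add_distrib, Finset.sum_sub_distrib]
    linarith [hT]
  rw [hadv]
  have comb : ∑ s, ∑ a, p s a * Adv P r V s a
      - α * ∑ s, ∑ a, p s a * Real.log (p s a / ∑ b, p s b)
      = ∑ s, ∑ a, (p s a * Adv P r V s a
          - α * (p s a * Real.log (p s a / ∑ b, p s b))) := by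
    rw [Finset.mul_sum]
    simp_rw [Finset.mul_sum]
    rw [← Finset.sum_sub_distrib]
    exact Finset.sum_congr rfl fun s _ => by rw [← Finset.sum_sub_distrib]
  rw [comb]
  calc ∑ s, ∑ a, (p s a * Adv P r V s a
          - α * (p s a * Real.log (p s a / ∑ b, p s b)))
      ≤ ∑ s, (∑ b, p s b) * η := by
        apply Finset.sum_le_sum
        intro s _
        refine le_trans (per_state α hα (p s) (hp0 s) (Adv P r V s)) ?_
        exact mul_le_mul_of_nonneg_left (hη s)
          (Finset.sum_nonneg fun b _ => hp0 s b)
    _ = η := by rw [← Finset.sum_mul, hp1, one_mul]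
end

section
/- Let α > 0, and define the pure action-entropy objective R_{α,0}(p) = Σ_{s,a} p(s,a) r(s,a) − α Σ_{s,a} p(s,a) log ( p(s,a) / Σ_b p(s,b) ), where terms with p(s,a) = 0 are set to 0. Suppose V : S → ℝ and η ∈ ℝ satisfy α · log ( Σ_a exp(A_V(s,a)/α) ) = η for every s ∈ S, and suppose p ∈ D is such that for every s with Σ_b p(s,b) > 0 and every a, p(s,a) / Σ_b p(s,b) = exp(A_V(s,a)/α) / Σ_b exp(A_V(s,b)/α). Then R_{α,0}(p) = η, and p maximizes R_{α,0} over D. -/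
open Finset

/-- The pure action-entropy objective
`R_{α,0}(p) = Σ_{s,a} p(s,a) r(s,a) − α Σ_{s,a} p(s,a) log(p(s,a)/Σ_b p(s,b))`
(terms with `p(s,a) = 0` vanish). -/
noncomputable def Raction {S A : Type} [Fintype S] [Fintype A]
    (r : S → A → ℝ) (α : ℝ) (p : S → A → ℝ) : ℝ :=
  (∑ s, ∑ a, p s a * r s a)
    - α * ∑ s, ∑ a, p s a * Real.log (p s a / ∑ b, p s b)

lemma state_bound {A : Type} [Fintype A] [Nonempty A]
    (α : ℝ) (hα : 0 < α) (f : A → ℝ) (q : A → ℝ) (hq : ∀ a, 0 ≤ q a) :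
    (∑ a, q a * f a) - α * ∑ a, q a * Real.log (q a / ∑ b, q b)
      ≤ (∑ b, q b) * (α * Real.log (∑ a, Real.exp (f a / α))) := by
  have hZ : (0:ℝ) < ∑ a, Real.exp (f a / α) :=
    Finset.sum_pos (fun a _ => Real.exp_pos _) univ_nonempty
  set Z := ∑ a, Real.exp (f a / α) with hZdef
  set μ := ∑ b, q b with hμdef
  rcases eq_or_lt_of_le (Finset.sum_nonneg (fun a _ => hq a) : (0:ℝ) ≤ μ) with h0 | hμ
  · have hq0 : ∀ a, q a = 0 := by
      intro a
      exact (Finset.sum_eq_zero_iff_of_nonneg (fun a _ => hq a)).mp h0.symm a (mem_univ a)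
    simp [hq0, ← h0, hμdef]
  · have key : ∀ a ∈ Finset.univ, q a * f a - α * (q a * Real.log (q a / μ))
        ≤ α * (μ * Real.exp (f a / α) / Z) - α * q a + (α * Real.log Z) * q a := by
      intro a _
      rcases eq_or_lt_of_le (hq a) with h0 | hpos
      · rw [← h0]
        simp only [zero_mul, mul_zero, sub_zero, zero_sub, neg_zero, add_zero]
        positivity
      · have he : (0:ℝ) < Real.exp (f a / α) := Real.exp_pos _
        have hx : (0:ℝ) < μ * Real.exp (f a / α) / (q a * Z) := by positivity
        have hlog := Real.log_le_sub_one_of_pos hx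
        have hlogeq : Real.log (μ * Real.exp (f a / α) / (q a * Z))
            = Real.log μ + f a / α - Real.log (q a) - Real.log Z := by
          rw [Real.log_div (by positivity) (by positivity), Real.log_mul hμ.ne' he.ne',
            Real.log_mul hpos.ne' hZ.ne', Real.log_exp]
          ring
        have h2 : α * q a * (Real.log μ + f a / α - Real.log (q a) - Real.log Z)
            ≤ α * q a * (μ * Real.exp (f a / α) / (q a * Z) - 1) := by
          rw [← hlogeq]
          exact mul_le_mul_of_nonneg_left hlog (by positivity)
        have lhs_eq : α * q a * (Real.log μ + f a / α - Real.log (q a) - Real.log Z)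
            = q a * f a - α * (q a * (Real.log (q a) - Real.log μ)) - (α * Real.log Z) * q a := by
          field_simp
          ring
        have rhs_eq : α * q a * (μ * Real.exp (f a / α) / (q a * Z) - 1)
            = α * (μ * Real.exp (f a / α) / Z) - α * q a := by
          field_simp
        rw [lhs_eq, rhs_eq] at h2
        have hqlog : Real.log (q a / μ) = Real.log (q a) - Real.log μ :=
          Real.log_div hpos.ne' hμ.ne'
        rw [hqlog]
        linarith
    have hs := Finset.sum_le_sum key
    have hL : ∑ a, (q a * f a - α * (q a * Real.log (q a / μ)))
        = (∑ a, q a * f a) - α * ∑ a, q a * Real.log (q a / μ) := by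
      rw [Finset.sum_sub_distrib, Finset.mul_sum]
    have hR : ∑ a, (α * (μ * Real.exp (f a / α) / Z) - α * q a + (α * Real.log Z) * q a)
        = μ * (α * Real.log Z) := by
      rw [Finset.sum_add_distrib, Finset.sum_sub_distrib, ← Finset.mul_sum, ← Finset.mul_sum,
        ← Finset.mul_sum]
      have h3 : ∑ a, μ * Real.exp (f a / α) / Z = μ * Z / Z := by
        rw [← Finset.sum_div, ← Finset.mul_sum]
      rw [h3, mul_div_assoc, div_self hZ.ne', mul_one, ← hμdef]
      ring
    rw [hL, hR] at hs
    exact hs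

lemma state_eq {A : Type} [Fintype A] [Nonempty A]
    (α : ℝ) (hα : 0 < α) (f : A → ℝ) (q : A → ℝ)
    (hμ : 0 < ∑ b, q b)
    (hpol : ∀ a, q a / (∑ b, q b) = Real.exp (f a / α) / (∑ b, Real.exp (f b / α))) :
    (∑ a, q a * f a) - α * ∑ a, q a * Real.log (q a / ∑ b, q b)
      = (∑ b, q b) * (α * Real.log (∑ a, Real.exp (f a / α))) := by
  have hZ : (0:ℝ) < ∑ b, Real.exp (f b / α) :=
    Finset.sum_pos (fun a _ => Real.exp_pos _) univ_nonempty
  have key : ∀ a, q a * Real.log (q a / ∑ b, q b) = q a * (f a / α - Real.log (∑ b, Real.exp (f b / α))) := by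
    intro a
    rw [hpol a, Real.log_div (Real.exp_pos _).ne' hZ.ne', Real.log_exp]
  simp_rw [key]
  have hsum : α * ∑ a, q a * (f a / α - Real.log (∑ b, Real.exp (f b / α)))
      = (∑ a, q a * f a) - (α * Real.log (∑ b, Real.exp (f b / α))) * (∑ b, q b) := by
    rw [Finset.mul_sum, Finset.mul_sum, ← Finset.sum_sub_distrib]
    apply Finset.sum_congr rfl
    intro a _
    field_simp
  rw [hsum]
  have : (∑ a, Real.exp (f a / α)) = ∑ b, Real.exp (f b / α) := rfl
  rw [this]
  ring

lemma adv_sum_eq {S A : Type} [Fintype S] [Fintype A]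
    (P : S → A → S → ℝ) (r : S → A → ℝ) (V : S → ℝ)
    (q : S → A → ℝ) (hstat : ∀ s' : S, (∑ s, ∑ a, P s a s' * q s a) = ∑ b, q s' b) :
    (∑ s, ∑ a, q s a * r s a) = ∑ s, ∑ a, q s a * Adv P r V s a := by
  unfold Adv
  have expand : ∀ s a, q s a * (r s a + (∑ s', V s' * P s a s') - V s)
      = q s a * r s a + (∑ s', V s' * (P s a s' * q s a)) - V s * q s a := by
    intro s a
    have h1 : q s a * (∑ s', V s' * P s a s') = ∑ s', V s' * (P s a s' * q s a) := by
      rw [Finset.mul_sum]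
      exact Finset.sum_congr rfl fun s' _ => by ring
    rw [← h1]; ring
  simp_rw [expand, Finset.sum_sub_distrib, Finset.sum_add_distrib]
  have hM : (∑ s, ∑ a, ∑ s', V s' * (P s a s' * q s a)) = ∑ s, ∑ a, V s * q s a := by
    have h1 : (∑ s, ∑ a, ∑ s', V s' * (P s a s' * q s a))
        = ∑ s', ∑ s, ∑ a, V s' * (P s a s' * q s a) := by
      rw [show (∑ s, ∑ a, ∑ s', V s' * (P s a s' * q s a))
          = ∑ s, ∑ s', ∑ a, V s' * (P s a s' * q s a) from
        Finset.sum_congr rfl fun s _ => Finset.sum_comm]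
      exact Finset.sum_comm
    rw [h1]
    have h2 : ∀ s' : S, (∑ s, ∑ a, V s' * (P s a s' * q s a)) = V s' * ∑ b, q s' b := by
      intro s'
      rw [← hstat s', Finset.mul_sum]
      exact Finset.sum_congr rfl fun s _ => by rw [Finset.mul_sum]
    simp_rw [h2, Finset.mul_sum]
  linarith [hM]

/-- if `α log Σ_a exp(A_V(s,a)/α) = η` for every `s`, and
`p ∈ D` has conditional (policy) probabilities given by the softmax of
`A_V(s,·)/α` wherever its state marginal is positive, then `R_{α,0}(p) = η`
and `p` maximizes `R_{α,0}` over `D`. -/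
theorem pure_action_entropy_optimality {S A : Type} [Fintype S] [Fintype A]
    [Nonempty S] [Nonempty A]
    (P : S → A → S → ℝ) (hP0 : ∀ s a s', 0 ≤ P s a s')
    (hP1 : ∀ s a, (∑ s', P s a s') = 1)
    (r : S → A → ℝ) (α : ℝ) (hα : 0 < α)
    (V : S → ℝ) (η : ℝ)
    (hη : ∀ s : S, α * Real.log (∑ a, Real.exp (Adv P r V s a / α)) = η)
    (p : S → A → ℝ) (hp : p ∈ Dset P)
    (hpolicy : ∀ s : S, 0 < (∑ b, p s b) → ∀ a : A,
      p s a / (∑ b, p s b) =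
        Real.exp (Adv P r V s a / α) / (∑ b, Real.exp (Adv P r V s b / α))) :
    Raction r α p = η ∧ ∀ q ∈ Dset P, Raction r α q ≤ Raction r α p := by
  have key : ∀ q : S → A → ℝ, q ∈ Dset P →
      Raction r α q = ∑ s, ((∑ a, q s a * Adv P r V s a)
        - α * ∑ a, q s a * Real.log (q s a / ∑ b, q s b)) := by
    intro q hq
    obtain ⟨hq0, hq1, hstat⟩ := hq
    unfold Raction
    rw [Finset.sum_sub_distrib, ← Finset.mul_sum]
    congr 1
    · exact adv_sum_eq P r V q hstat
  have sum_marg : ∀ q : S → A → ℝ, (∑ s, ∑ a, q s a) = 1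
      → (∑ s, (∑ b, q s b) * η) = η := by
    intro q h
    rw [← Finset.sum_mul, h, one_mul]
  obtain ⟨hp0, hp1, hpstat⟩ := hp
  have hpη : Raction r α p = η := by
    rw [key p ⟨hp0, hp1, hpstat⟩]
    have hstate : ∀ s : S, (∑ a, p s a * Adv P r V s a)
        - α * ∑ a, p s a * Real.log (p s a / ∑ b, p s b) = (∑ b, p s b) * η := by
      intro s
      rcases eq_or_lt_of_le (Finset.sum_nonneg fun b _ => hp0 s b : (0:ℝ) ≤ ∑ b, p s b)
        with h0 | hpos
      · have hz : ∀ a, p s a = 0 := fun a =>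
          (Finset.sum_eq_zero_iff_of_nonneg (fun b _ => hp0 s b)).mp h0.symm a (mem_univ a)
        simp [hz, ← h0]
      · rw [← hη s]
        exact state_eq α hα (Adv P r V s) (p s) hpos (hpolicy s hpos)
    simp_rw [hstate]
    exact sum_marg p hp1
  refine ⟨hpη, ?_⟩
  intro q hq
  obtain ⟨hq0, hq1, hqstat⟩ := hq
  rw [key q ⟨hq0, hq1, hqstat⟩, hpη]
  calc ∑ s, ((∑ a, q s a * Adv P r V s a)
        - α * ∑ a, q s a * Real.log (q s a / ∑ b, q s b))
      ≤ ∑ s, (∑ b, q s b) * η := by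
        apply Finset.sum_le_sum
        intro s _
        rw [← hη s]
        exact state_bound α hα (Adv P r V s) (q s) (hq0 s)
    _ = η := sum_marg q hq1
end

section
/- Let α > 0 and β > 0. Suppose s₀ ∈ S is an absorbing state with zero reward, i.e., P(s₀|s₀,a) = 1 and r(s₀,a) = 0 for every action a, and suppose there exist s' ≠ s₀ and an action a' with P(s₀|s',a') > 0. Then for every V : S → ℝ, the one-variable function t ↦ log Z_{V + t·𝟙_{s₀}} (where 𝟙_{s₀}(s) = 1 if s = s₀ and 0 otherwise) is strictly increasing on ℝ; in particular, the dual function V ↦ log Z_V has no critical point and attains no minimum at any finite V. -/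
open Finset

/-!
Moving `V` along the indicator of `s₀` by `t` shifts each advantage by `t · c(s,a)` with
`c(s,a) = P(s₀|s,a) − 𝟙[s = s₀]`. Absorption of `s₀` makes `c ≥ 0`, and reachability of `s₀`
makes `c(s',a') > 0`. So `t ↦ log Z` is a log of a sum of increasing powers of sums of
exponentials of nondecreasing affine functions, one of them strictly increasing, and its
derivative is everywhere positive. This gives strict monotonicity, a nonzero partial derivative
in the coordinate `s₀`, and the absence of a minimum.
-/

section SumExp

variable {κ : Type*} [Fintype κ]

theorem hasDerivAt_sum_exp_affine (x c : κ → ℝ) (α t : ℝ) :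
    HasDerivAt (fun u => ∑ k, Real.exp ((x k + u * c k) / α))
      (∑ k, Real.exp ((x k + t * c k) / α) * (c k / α)) t :=
  HasDerivAt.fun_sum fun k _ => HasDerivAt.exp <| by
    simpa using (((hasDerivAt_id t).mul_const (c k)).const_add (x k)).div_const α

theorem exists_hasDerivAt_rpow_sum_exp_affine [Nonempty κ] (x c : κ → ℝ) {α γ : ℝ}
    (hα : 0 < α) (hγ : 0 < γ) (hc : ∀ k, 0 ≤ c k) (t : ℝ) :
    ∃ d, 0 ≤ d ∧ ((∃ k, 0 < c k) → 0 < d) ∧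
      HasDerivAt (fun u => (∑ k, Real.exp ((x k + u * c k) / α)) ^ γ) d t := by
  have hE : 0 < ∑ k, Real.exp ((x k + t * c k) / α) :=
    sum_pos (fun k _ => Real.exp_pos _) univ_nonempty
  have hterm : ∀ k, 0 ≤ Real.exp ((x k + t * c k) / α) * (c k / α) := fun k =>
    mul_nonneg (Real.exp_pos _).le (div_nonneg (hc k) hα.le)
  refine ⟨_, ?_, ?_, (hasDerivAt_sum_exp_affine x c α t).rpow_const (Or.inl hE.ne')⟩
  · exact mul_nonneg (mul_nonneg (sum_nonneg fun k _ => hterm k) hγ.le)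
      (Real.rpow_nonneg hE.le _)
  · rintro ⟨k₁, hk₁⟩
    refine mul_pos (mul_pos ?_ hγ) (Real.rpow_pos_of_pos hE _)
    exact sum_pos' (fun k _ => hterm k)
      ⟨k₁, mem_univ _, mul_pos (Real.exp_pos _) (div_pos hk₁ hα)⟩

theorem exists_pos_hasDerivAt_log_sum_rpow_sum_exp_affine {ι : Type*} [Fintype ι]
    [Nonempty κ] (x c : ι → κ → ℝ) {α γ : ℝ} (hα : 0 < α) (hγ : 0 < γ)
    (hc : ∀ i k, 0 ≤ c i k) (hpos : ∃ i k, 0 < c i k) (t : ℝ) :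
    ∃ D, 0 < D ∧ HasDerivAt
      (fun u => Real.log (∑ i, (∑ k, Real.exp ((x i k + u * c i k) / α)) ^ γ)) D t := by
  obtain ⟨i₁, hi₁⟩ := hpos
  choose d hd_nonneg hd_pos hd using fun i =>
    exists_hasDerivAt_rpow_sum_exp_affine (x i) (c i) hα hγ (hc i) t
  have hZ : 0 < ∑ i, (∑ k, Real.exp ((x i k + t * c i k) / α)) ^ γ :=
    sum_pos (fun i _ => Real.rpow_pos_of_pos
      (sum_pos (fun k _ => Real.exp_pos _) univ_nonempty) _) ⟨i₁, mem_univ _⟩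
  have hD : 0 < ∑ i, d i :=
    sum_pos' (fun i _ => hd_nonneg i) ⟨i₁, mem_univ _, hd_pos i₁ hi₁⟩
  exact ⟨_, div_pos hD hZ, (HasDerivAt.fun_sum fun i _ => hd i).log hZ.ne'⟩

end SumExp

section Advantage

variable {S A : Type} [Fintype S] (P : S → A → S → ℝ) (r : S → A → ℝ)

theorem Adv_add_mul (V W : S → ℝ) (t : ℝ) (s : S) (a : A) :
    Adv P r (fun s => V s + t * W s) s a
      = Adv P r V s a + t * ((∑ s', W s' * P s a s') - W s) := by
  simp only [Adv, add_mul, sum_add_distrib, mul_assoc, ← mul_sum]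
  ring

theorem Adv_add_mul_indicator [DecidableEq S] (V : S → ℝ) (t : ℝ) (s₀ s : S) (a : A) :
    Adv P r (fun s => V s + t * (if s = s₀ then (1 : ℝ) else 0)) s a
      = Adv P r V s a + t * (P s a s₀ - if s = s₀ then 1 else 0) := by
  rw [Adv_add_mul]
  simp

theorem exists_pos_hasDerivAt_log_Zfun_add_mul_indicator [Fintype A] [DecidableEq S]
    [Nonempty A] (hP0 : ∀ s a s', 0 ≤ P s a s') {α β : ℝ} (hα : 0 < α) (hβ : 0 < β)
    {s₀ : S} (habs : ∀ a, P s₀ a s₀ = 1) {s₁ : S} {a₁ : A} (hs₁ : s₁ ≠ s₀)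
    (hreach : 0 < P s₁ a₁ s₀) (V : S → ℝ) (t : ℝ) :
    ∃ D, 0 < D ∧ HasDerivAt (fun u => Real.log
      (Zfun P r α β (fun s => V s + u * (if s = s₀ then (1 : ℝ) else 0)))) D t := by
  have hc : ∀ s a, 0 ≤ P s a s₀ - if s = s₀ then (1 : ℝ) else 0 := by
    intro s a
    split_ifs with h
    · simp [h, habs a]
    · simpa using hP0 s a s₀
  have hpos : 0 < P s₁ a₁ s₀ - if s₁ = s₀ then (1 : ℝ) else 0 := by simpa [hs₁] using hreach
  simpa only [Zfun, Adv_add_mul_indicator] using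
    exists_pos_hasDerivAt_log_sum_rpow_sum_exp_affine (Adv P r V)
      (fun s a => P s a s₀ - if s = s₀ then 1 else 0) hα (div_pos hα hβ) hc
      ⟨s₁, a₁, hpos⟩ t

end Advantage

theorem update_eq_add_mul_indicator {S : Type} [DecidableEq S] (V : S → ℝ) (s₀ : S) (t : ℝ) :
    Function.update V s₀ t = fun s => V s + (t - V s₀) * (if s = s₀ then 1 else 0) := by
  funext s
  by_cases hs : s = s₀ <;> simp [Function.update, hs]

theorem absorbing_state_dual_strictMono_general {S A : Type} [Fintype S] [Fintype A]
    [DecidableEq S] [Nonempty A]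
    (P : S → A → S → ℝ) (hP0 : ∀ s a s', 0 ≤ P s a s')
    (r : S → A → ℝ) (α β : ℝ) (hα : 0 < α) (hβ : 0 < β)
    (s₀ : S) (habs : ∀ a : A, P s₀ a s₀ = 1 ∧ r s₀ a = 0)
    (hreach : ∃ (s' : S) (a' : A), s' ≠ s₀ ∧ 0 < P s' a' s₀) :
    (∀ V : S → ℝ, StrictMono (fun t : ℝ =>
        Real.log (Zfun P r α β
          (fun s => V s + t * (if s = s₀ then (1 : ℝ) else 0))))) ∧
      (∀ V : S → ℝ, ¬ (∀ s : S,
        deriv (fun t : ℝ =>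
          Real.log (Zfun P r α β (Function.update V s t))) (V s) = 0)) ∧
      (∀ V : S → ℝ,
        ¬ IsMinOn (fun W : S → ℝ => Real.log (Zfun P r α β W)) Set.univ V) := by
  obtain ⟨s₁, a₁, hs₁, hP⟩ := hreach
  have hderiv := exists_pos_hasDerivAt_log_Zfun_add_mul_indicator P r hP0 hα hβ
    (fun a => (habs a).1) hs₁ hP
  have hmono : ∀ V : S → ℝ, StrictMono (fun t : ℝ =>
      Real.log (Zfun P r α β (fun s => V s + t * (if s = s₀ then (1 : ℝ) else 0)))) :=
    fun V => strictMono_of_deriv_pos fun t => by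
      obtain ⟨D, hD, hV⟩ := hderiv V t
      rwa [hV.deriv]
  refine ⟨hmono, fun V hcrit => ?_, fun V hmin => ?_⟩
  · obtain ⟨D, hD, hV⟩ := hderiv V 0
    have h := hcrit s₀
    simp only [update_eq_add_mul_indicator V s₀] at h
    rw [deriv_comp_sub_const (f := fun u => Real.log (Zfun P r α β
      (fun s => V s + u * (if s = s₀ then (1 : ℝ) else 0)))), sub_self, hV.deriv] at h
    exact hD.ne' h
  · have hlt := hmono V neg_one_lt_zero
    have hle := isMinOn_iff.mp hmin _ (Set.mem_univ
      (fun s => V s + (-1 : ℝ) * (if s = s₀ then (1 : ℝ) else 0)))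
    simp only [zero_mul, add_zero] at hlt
    exact hle.not_gt hlt

/-- if `s₀` is an absorbing state with zero reward that is
reachable from some other state, then for every `V` the map
`t ↦ log Z_{V + t·𝟙_{s₀}}` is strictly increasing; in particular the dual
function has no critical point and attains no minimum at any finite `V`. -/
theorem absorbing_state_dual_strictMono {S A : Type} [Fintype S] [Fintype A]
    [DecidableEq S] [Nonempty S] [Nonempty A]
    (P : S → A → S → ℝ) (hP0 : ∀ s a s', 0 ≤ P s a s')
    (hP1 : ∀ s a, (∑ s', P s a s') = 1)
    (r : S → A → ℝ) (α β : ℝ) (hα : 0 < α) (hβ : 0 < β)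
    (s₀ : S) (habs : ∀ a : A, P s₀ a s₀ = 1 ∧ r s₀ a = 0)
    (hreach : ∃ (s' : S) (a' : A), s' ≠ s₀ ∧ 0 < P s' a' s₀) :
    (∀ V : S → ℝ, StrictMono (fun t : ℝ =>
        Real.log (Zfun P r α β
          (fun s => V s + t * (if s = s₀ then (1 : ℝ) else 0))))) ∧
      (∀ V : S → ℝ, ¬ (∀ s : S,
        deriv (fun t : ℝ =>
          Real.log (Zfun P r α β (Function.update V s t))) (V s) = 0)) ∧
      (∀ V : S → ℝ,
        ¬ IsMinOn (fun W : S → ℝ => Real.log (Zfun P r α β W)) Set.univ V) :=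
  absorbing_state_dual_strictMono_general P hP0 r α β hα hβ s₀ habs hreach
end
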